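/- arXiv:0911.1038 — 3 statements merged into one kernel-verified Lean document; each statement's English description precedes it below -/
import Mathlib

section
/- For every partition λ (with parts ≥ 1), the formal power series P_λ(t) lies in the ℚ-linear span of the set of series E(p_1,…,p_l) with l ≥ 1 and p_1,…,p_l ≥ 0, i.e. P_λ is a finite ℚ-linear combination of expressions of the form C(t)^{p_1} D C(t)^{p_2} ⋯ D C(t)^{p_l}. -/
noncomputable section

/-- The base ring `A = ℚ[R₂, R₃, …]`: the polynomial ring over `ℚ` in countably many
variables, where the variable of index `i` stands for the free cumulant `Rᵢ`
(only the variables of index `≥ 2` are ever used). -/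
abbrev A : Type := MvPolynomial ℕ ℚ

/-- The set of partitions of `n` all of whose parts are at least `2`. -/
def P2 (n : ℕ) : Finset (Nat.Partition n) :=
  Finset.univ.filter fun μ => ∀ i ∈ μ.parts, 2 ≤ i

/-- `𝓡_μ = ∏_{i≥2} ((i−1)Rᵢ)^{mᵢ(μ)}/mᵢ(μ)!`, for `m` the multiset of parts of `μ`. -/
def Rmu (m : Multiset ℕ) : A :=
  (∏ i ∈ m.toFinset, ((m.count i).factorial : ℚ))⁻¹ •
    (m.map fun i : ℕ => (MvPolynomial.C ((i : ℚ) - 1) : A) * MvPolynomial.X i).prod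

/-- `Q_i = Σ_{|μ|=i} (l(μ)−1)! 𝓡_μ`, the sum ranging over partitions of `i`
with all parts `≥ 2`. -/
def Qpol (i : ℕ) : A :=
  ∑ μ ∈ P2 i, ((μ.parts.card - 1).factorial : ℚ) • Rmu μ.parts

/-- `𝓠_μ = ∏_{i≥2} Q_i^{mᵢ(μ)}/mᵢ(μ)!`, for `m` the multiset of parts of `μ`. -/
def Qmu (m : Multiset ℕ) : A :=
  (∏ i ∈ m.toFinset, ((m.count i).factorial : ℚ))⁻¹ • (m.map Qpol).prod

/-- The power series `S(t) = Σ_{i≥2} (i−1) Rᵢ tⁱ ∈ A[[t]]`. -/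
def Sser : PowerSeries A :=
  PowerSeries.mk fun i =>
    if 2 ≤ i then (MvPolynomial.C ((i : ℚ) - 1) : A) * MvPolynomial.X i else 0

/-- `C(t) = (1 − Σ_{i≥2}(i−1)Rᵢ tⁱ)⁻¹ ∈ A[[t]]`; the inverse exists (and is computed by
`PowerSeries.invOfUnit` with unit `1`) since the constant term of `1 - S` is `1`. -/
def Cser : PowerSeries A := PowerSeries.invOfUnit (1 - Sser) 1

/-- `C(t)⁻¹ = 1 − Σ_{i≥2}(i−1)Rᵢ tⁱ`. -/
def CserInv : PowerSeries A := 1 - Sser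

/-- The operator `D = t·d/dt` on `A[[t]]`, sending `Σ aₖ tᵏ` to `Σ k·aₖ tᵏ`. -/
def Dop (F : PowerSeries A) : PowerSeries A :=
  PowerSeries.mk fun k => (k : A) * PowerSeries.coeff k F

/-- `A₁(t) = C(t)` and `A_m(t) = C(t)·(D + (m−2)) A_{m−1}(t)` for `m ≥ 2`
(the value at `0` is irrelevant). -/
def Aser : ℕ → PowerSeries A
  | 0 => 1
  | 1 => Cser
  | (m + 2) => Cser * (Dop (Aser (m + 1)) + (m : PowerSeries A) * Aser (m + 1))

/-- `P_m(t) = −A_m(t)/m!`. -/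
def Pser (m : ℕ) : PowerSeries A := (-(m.factorial : ℚ)⁻¹) • Aser m

/-- `P_λ(t) = ∏_j P_{λ_j}(t)`, for `m` the multiset of parts of `λ`. -/
def Plam (m : Multiset ℕ) : PowerSeries A := (m.map Pser).prod

/-- Evaluation of the monomial symmetric function `m_lam` at the finitely many values
given by the multiset `μ` (and `0` elsewhere):
`m_lam(x) = (∏_j m_j(lam)!)⁻¹ Σ_{φ injective} ∏_i x_{φ(i)}^{lam_i}`. -/
def msymEval (lam : Multiset ℕ) (μ : Multiset ℕ) : ℚ :=
  (∏ j ∈ lam.toFinset, ((lam.count j).factorial : ℚ))⁻¹ *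
    ∑ φ ∈ Finset.univ.filter
        (fun φ : Fin lam.toList.length → Fin μ.toList.length => Function.Injective φ),
      ∏ i, ((μ.toList.get (φ i) : ℕ) : ℚ) ^ lam.toList.get i

/-- `f : Multiset ℕ → ℚ` is (the evaluation, at the multiset of parts of a partition, of)
a symmetric function of degree at most `d` with rational coefficients: a finite `ℚ`-linear
combination of monomial symmetric functions `m_lam` over partitions `lam` with `|lam| ≤ d`. -/
def IsSymmFunc (d : ℕ) (f : Multiset ℕ → ℚ) : Prop :=
  ∃ c : Multiset ℕ →₀ ℚ,
    (∀ lam ∈ c.support, (∀ i ∈ lam, 1 ≤ i) ∧ lam.sum ≤ d) ∧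
    ∀ μ : Multiset ℕ, f μ = ∑ lam ∈ c.support, c lam * msymEval lam μ

/-- `m̂_lam(k)`: the evaluation of the monomial symmetric function `m_lam` at
`x_i = i` for `1 ≤ i ≤ k−1` and `x_i = 0` for `i ≥ k`. -/
def mhat (lam : Multiset ℕ) (k : ℕ) : ℚ :=
  msymEval lam ((Multiset.range (k - 1)).map fun i => i + 1)

/-- `Σ_{k,k+1−2g} = −(1/k)·[t^{k+1−2g}] Σ_{λ ⊢ 2g} m̂_λ(k)·P_λ(t)·C(t)⁻¹ ∈ A`:
by the theorem of Goulden and Rattan this is the homogeneous part of degree `k+1−2g`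
of the Kerov character polynomial `K_k`. -/
def SigmaGR (g k : ℕ) : A :=
  (-(k : ℚ)⁻¹) • PowerSeries.coeff (k + 1 - 2 * g)
    (∑ lam : Nat.Partition (2 * g), mhat lam.parts k • (Plam lam.parts * CserInv))

/-- The nice series of parameter `s` (paper: genus `g` with `s = 2g`) associated with `f`:
`F(t) = Σ_{k≥0} tᵏ Σ_{|μ|=k} (l(μ)+s−2)! f(μ) 𝓡_μ`. -/
def niceSeries (s : ℕ) (f : Multiset ℕ → ℚ) : PowerSeries A :=
  PowerSeries.mk fun k => ∑ μ ∈ P2 k,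
    (((μ.parts.card + s - 2).factorial : ℚ) * f μ.parts) • Rmu μ.parts

/-- The very nice series of parameter `s` (paper: genus `g` with `s = 2g`) associated with
`f`: `F(t) = Σ_{k≥0} tᵏ Σ_{|μ|=k} (s−1)^{l(μ)} f(μ) 𝓠_μ`. -/
def veryNiceSeries (s : ℕ) (f : Multiset ℕ → ℚ) : PowerSeries A :=
  PowerSeries.mk fun k => ∑ μ ∈ P2 k,
    ((((s - 1 : ℕ) : ℚ)) ^ μ.parts.card * f μ.parts) • Qmu μ.parts


/-- `E(p_1,…,p_l) = C^{p_1}·D(C^{p_2}·D(⋯ D(C^{p_l})⋯))`, each `D` acting on everything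
to its right (the value on the empty list is irrelevant). -/
def Eser : List ℕ → PowerSeries A
  | [] => 1
  | [p] => Cser ^ p
  | p :: q :: r => Cser ^ p * Dop (Eser (q :: r))

-- auxiliary
def Sspan : Submodule ℚ (PowerSeries A) :=
  Submodule.span ℚ {F : PowerSeries A | ∃ l : List ℕ, l ≠ [] ∧ F = Eser l}

lemma Eser_mem (l : List ℕ) (h : l ≠ []) : Eser l ∈ Sspan :=
  Submodule.subset_span ⟨l, h, rfl⟩

lemma Dop_add (F G : PowerSeries A) : Dop (F + G) = Dop F + Dop G := by
  ext k
  simp [Dop, mul_add]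

lemma Dop_smul (c : ℚ) (F : PowerSeries A) : Dop (c • F) = c • Dop F := by
  ext k
  simp [Dop, Algebra.mul_smul_comm]

lemma Dop_zero : Dop (0 : PowerSeries A) = 0 := by
  ext k; simp [Dop]

lemma Dop_mul (F G : PowerSeries A) : Dop (F * G) = Dop F * G + F * Dop G := by
  apply PowerSeries.ext
  intro k
  simp only [Dop, PowerSeries.coeff_mk, map_add, PowerSeries.coeff_mul,
    PowerSeries.coeff_mk, Finset.mul_sum, ← Finset.sum_add_distrib]
  apply Finset.sum_congr rfl
  intro p hp
  rw [Finset.HasAntidiagonal.mem_antidiagonal] at hp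
  subst hp
  push_cast
  ring

lemma Dop_Eser (l : List ℕ) (h : l ≠ []) : Dop (Eser l) = Eser (0 :: l) := by
  match l with
  | [p] => simp [Eser]
  | q :: r :: s => simp [Eser]

lemma Cpow_mul_Eser (p q : ℕ) (r : List ℕ) :
    Cser ^ p * Eser (q :: r) = Eser ((p + q) :: r) := by
  match r with
  | [] => simp [Eser, pow_add]
  | a :: b => simp [Eser, pow_add, mul_assoc]

lemma Dop_mem {x : PowerSeries A} (hx : x ∈ Sspan) : Dop x ∈ Sspan := by
  induction hx using Submodule.span_induction with
  | mem x h => obtain ⟨l, hl, rfl⟩ := h; rw [Dop_Eser l hl]; exact Eser_mem _ (by simp)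
  | zero => rw [Dop_zero]; exact Submodule.zero_mem _
  | add a b _ _ ha hb => rw [Dop_add]; exact Submodule.add_mem _ ha hb
  | smul c a _ ha => rw [Dop_smul]; exact Submodule.smul_mem _ _ ha

lemma Cpow_mul_mem (p : ℕ) {x : PowerSeries A} (hx : x ∈ Sspan) : Cser ^ p * x ∈ Sspan := by
  induction hx using Submodule.span_induction with
  | mem x h =>
    obtain ⟨l, hl, rfl⟩ := h
    match l with
    | q :: r => rw [Cpow_mul_Eser]; exact Eser_mem _ (by simp)
  | zero => rw [mul_zero]; exact Submodule.zero_mem _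
  | add a b _ _ ha hb => rw [mul_add]; exact Submodule.add_mem _ ha hb
  | smul c a _ ha => rw [Algebra.mul_smul_comm]; exact Submodule.smul_mem _ _ ha

lemma Eser_mul_Eser : ∀ (m : ℕ) (l1 l2 : List ℕ), l1 ≠ [] → l2 ≠ [] →
    2 * (l1.length + l2.length) + l1.length ≤ m → Eser l1 * Eser l2 ∈ Sspan := by
  intro m
  induction m with
  | zero => intro l1 l2 h1 h2 hm; cases l1 <;> simp_all
  | succ m ih =>
    intro l1 l2 h1 h2 hm
    match l1, l2 with
    | p :: r1, [q] =>
      rw [show Eser [q] = Cser ^ q from rfl, mul_comm, Cpow_mul_Eser]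
      exact Eser_mem _ (by simp)
    | [p], q :: r2 =>
      rw [show Eser [p] = Cser ^ p from rfl, Cpow_mul_Eser]
      exact Eser_mem _ (by simp)
    | p :: a :: r1, q :: b :: r2 =>
      have key : Eser (p :: a :: r1) * Eser (q :: b :: r2)
          = Cser ^ (p + q) * (Dop (Eser (a :: r1) * Eser (0 :: b :: r2))
              - Eser (a :: r1) * Eser (0 :: 0 :: b :: r2)) := by
        rw [← Dop_Eser (b :: r2) (by simp), ← Dop_Eser (0 :: b :: r2) (by simp),
          ← Dop_Eser (b :: r2) (by simp), Dop_mul]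
        rw [show Eser (p :: a :: r1) = Cser ^ p * Dop (Eser (a :: r1)) from rfl,
          show Eser (q :: b :: r2) = Cser ^ q * Dop (Eser (b :: r2)) from rfl]
        rw [pow_add]
        ring
      rw [key]
      apply Cpow_mul_mem
      apply Submodule.sub_mem
      · apply Dop_mem
        apply ih <;> simp_all
        omega
      · apply ih <;> simp_all
        omega

lemma mul_mem_Sspan {x y : PowerSeries A} (hx : x ∈ Sspan) (hy : y ∈ Sspan) :
    x * y ∈ Sspan := by
  induction hx using Submodule.span_induction with
  | mem x h =>
    obtain ⟨l1, hl1, rfl⟩ := h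
    induction hy using Submodule.span_induction with
    | mem y h =>
      obtain ⟨l2, hl2, rfl⟩ := h
      exact Eser_mul_Eser _ l1 l2 hl1 hl2 le_rfl
    | zero => rw [mul_zero]; exact Submodule.zero_mem _
    | add a b _ _ ha hb => rw [mul_add]; exact Submodule.add_mem _ ha hb
    | smul c a _ ha => rw [Algebra.mul_smul_comm]; exact Submodule.smul_mem _ _ ha
  | zero => rw [zero_mul]; exact Submodule.zero_mem _
  | add a b _ _ ha hb => rw [add_mul]; exact Submodule.add_mem _ ha hb
  | smul c a _ ha => rw [Algebra.smul_mul_assoc]; exact Submodule.smul_mem _ _ ha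

lemma Cser_mul_mem {x : PowerSeries A} (hx : x ∈ Sspan) : Cser * x ∈ Sspan := by
  rw [← pow_one Cser]; exact Cpow_mul_mem 1 hx

lemma Aser_mem (m : ℕ) : Aser m ∈ Sspan := by
  induction m with
  | zero => exact Eser_mem [0] (by simp)
  | succ k ih =>
    match k, ih with
    | 0, _ => simpa [Aser, Eser] using Eser_mem [1] (by simp)
    | k + 1, ih =>
      rw [show Aser (k + 2) = Cser * (Dop (Aser (k + 1)) + (k : PowerSeries A) * Aser (k + 1))
        from rfl]
      apply Cser_mul_mem
      apply Submodule.add_mem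
      · exact Dop_mem ih
      · rw [← nsmul_eq_mul]
        exact AddSubmonoid.nsmul_mem (Sspan.toAddSubmonoid) ih k

/-- For every partition `λ`, `P_λ(t)` lies in the `ℚ`-linear span of the series
`E(p_1,…,p_l) = C^{p_1} D C^{p_2} ⋯ D C^{p_l}` with `l ≥ 1` and `p_1,…,p_l ≥ 0`. -/
theorem Plam_mem_span (n : ℕ) (lam : Nat.Partition n) :
    Plam lam.parts ∈ Submodule.span ℚ
      {F : PowerSeries A | ∃ l : List ℕ, l ≠ [] ∧ F = Eser l} := by
  show Plam lam.parts ∈ Sspan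
  unfold Plam
  generalize lam.parts = m
  induction m using Multiset.induction with
  | empty =>
    simp only [Multiset.map_zero, Multiset.prod_zero]
    have : (1 : PowerSeries A) = Eser [0] := by simp [Eser]
    rw [this]; exact Eser_mem _ (by simp)
  | cons a s ih =>
    rw [Multiset.map_cons, Multiset.prod_cons]
    unfold Pser
    rw [Algebra.smul_mul_assoc]
    exact Submodule.smul_mem _ _ (mul_mem_Sspan (Aser_mem a) ih)


end
end

section
/- Let s ≥ 2 be an integer and let F(t) = Σ_{k≥0} t^k Σ_{|μ|=k}(l(μ)+s−2)! f(μ) 𝓡_μ be the nice series of parameter s associated with a symmetric function f of degree at most d. Then there exists a symmetric function f' of degree at most d such that C(t)·F(t) equals the nice series of parameter s+1 associated with f' (i.e. multiplication by C(t) raises the genus by 1/2 while not increasing the degree). -/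
noncomputable section

namespace CNAux

open Finset

/-- sum over injections of a monomial -/
def Ninj {r n : ℕ} (f : Fin r → ℕ) (g : Fin n → ℚ) : ℚ :=
  ∑ φ ∈ Finset.univ.filter (fun φ : Fin r → Fin n => Function.Injective φ),
    ∏ i, g (φ i) ^ f i

lemma Ninj_congr {r n n' : ℕ} (f : Fin r → ℕ) (g : Fin n → ℚ) (g' : Fin n' → ℚ)
    (σ : Fin n ≃ Fin n') (hg : ∀ q, g q = g' (σ q)) : Ninj f g = Ninj f g' := by
  unfold Ninj
  refine Finset.sum_bij' (fun φ _ => (σ : Fin n → Fin n') ∘ φ)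
    (fun ψ _ => (σ.symm : Fin n' → Fin n) ∘ ψ) ?_ ?_ ?_ ?_ ?_
  · intro φ hφ
    simp only [Finset.mem_filter, Finset.mem_univ, true_and] at hφ ⊢
    exact σ.injective.comp hφ
  · intro ψ hψ
    simp only [Finset.mem_filter, Finset.mem_univ, true_and] at hψ ⊢
    exact σ.symm.injective.comp hψ
  · intro φ _; funext i; simp
  · intro ψ _; funext i; simp
  · intro φ _
    refine Finset.prod_congr rfl fun i _ => ?_
    rw [hg]; rfl

lemma Ninj_of_lt {r n : ℕ} (h : n < r) (f : Fin r → ℕ) (g : Fin n → ℚ) : Ninj f g = 0 := by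
  unfold Ninj
  rw [Finset.filter_false_of_mem, Finset.sum_empty]
  intro φ _ hφ
  have := Fintype.card_le_of_injective φ hφ
  simp only [Fintype.card_fin] at this
  omega

lemma sum_Ninj_succAbove {r n : ℕ} (f : Fin r → ℕ) (g : Fin (n + 1) → ℚ) :
    ∑ q : Fin (n + 1), Ninj f (g ∘ q.succAbove) = ((n + 1 : ℚ) - r) * Ninj f g := by
  by_cases hr : r ≤ n + 1
  · have step1 : ∀ q : Fin (n + 1), Ninj f (g ∘ q.succAbove)
        = ∑ φ ∈ Finset.univ.filter
            (fun φ : Fin r → Fin (n + 1) => Function.Injective φ ∧ ∀ i, φ i ≠ q),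
            ∏ i, g (φ i) ^ f i := by
      intro q
      unfold Ninj
      refine Finset.sum_bij (fun ψ _ => q.succAbove ∘ ψ) ?_ ?_ ?_ ?_
      · intro ψ hψ
        simp only [mem_filter, mem_univ, true_and] at hψ ⊢
        exact ⟨Fin.succAbove_right_injective.comp hψ, fun i => Fin.succAbove_ne q (ψ i)⟩
      · intro ψ1 _ ψ2 _ he
        funext i
        exact Fin.succAbove_right_injective (congrFun he i)
      · intro φ hφ
        simp only [mem_filter, mem_univ, true_and] at hφ
        obtain ⟨hinj, hne⟩ := hφ
        choose ψ hψ using fun i => Fin.exists_succAbove_eq (hne i)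
        refine ⟨ψ, ?_, funext hψ⟩
        simp only [mem_filter, mem_univ, true_and]
        intro i j hij
        apply hinj
        rw [← hψ i, ← hψ j, hij]
      · intro ψ _; rfl
    have hcard : ∀ φ : Fin r → Fin (n + 1), Function.Injective φ →
        (Finset.univ.filter (fun q => ∀ i, φ i ≠ q)).card = n + 1 - r := by
      intro φ hφ
      have h1 : Finset.univ.filter (fun q => ∀ i, φ i ≠ q) = (Finset.image φ Finset.univ)ᶜ := by
        ext q
        simp [eq_comm, not_exists]
      rw [h1, Finset.card_compl, Finset.card_image_of_injective _ hφ]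
      simp
    calc ∑ q : Fin (n + 1), Ninj f (g ∘ q.succAbove)
        = ∑ q : Fin (n + 1), ∑ φ ∈ Finset.univ.filter
            (fun φ : Fin r → Fin (n + 1) => Function.Injective φ),
            (if (∀ i, φ i ≠ q) then ∏ i, g (φ i) ^ f i else 0) := by
          refine Finset.sum_congr rfl fun q _ => ?_
          rw [step1 q]
          rw [← Finset.sum_filter, Finset.filter_filter]
      _ = ∑ φ ∈ Finset.univ.filter
            (fun φ : Fin r → Fin (n + 1) => Function.Injective φ),
            ∑ q : Fin (n + 1), (if (∀ i, φ i ≠ q) then ∏ i, g (φ i) ^ f i else 0) :=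
          Finset.sum_comm
      _ = ∑ φ ∈ Finset.univ.filter
            (fun φ : Fin r → Fin (n + 1) => Function.Injective φ),
            ((n + 1 - r : ℕ) : ℚ) * ∏ i, g (φ i) ^ f i := by
          refine Finset.sum_congr rfl fun φ hφ => ?_
          simp only [mem_filter, mem_univ, true_and] at hφ
          rw [← Finset.sum_filter, Finset.sum_const, hcard φ hφ, nsmul_eq_mul]
      _ = ((n + 1 : ℚ) - r) * Ninj f g := by
          rw [← Finset.mul_sum]
          congr 1
          rw [Nat.cast_sub hr]
          push_cast
          ring
  · push_neg at hr
    rw [Ninj_of_lt (by omega) f g, mul_zero]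
    exact Finset.sum_eq_zero fun q _ => Ninj_of_lt (by omega) f (g ∘ q.succAbove)

lemma perm_get_equiv {α : Type*} {l1 l2 : List α} (h : l1.Perm l2) :
    ∃ σ : Fin l1.length ≃ Fin l2.length, ∀ q, l1.get q = l2.get (σ q) := by
  induction h with
  | nil => exact ⟨Equiv.refl _, fun q => rfl⟩
  | @cons x t1 t2 h ih =>
    obtain ⟨σ, hσ⟩ := ih
    refine ⟨(finSuccEquiv _).trans ((Equiv.optionCongr σ).trans (finSuccEquiv _).symm),
      fun q => ?_⟩
    induction q using Fin.cases with
    | zero => simp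
    | succ j => simpa using hσ j
  | swap x y t =>
    refine ⟨(Equiv.swap (0 : Fin (t.length + 1 + 1)) (1 : Fin (t.length + 1 + 1)) :
      Fin (t.length + 1 + 1) ≃ Fin (t.length + 1 + 1)), fun q => ?_⟩
    induction q using Fin.cases with
    | zero => simp [Equiv.swap_apply_left]
    | succ j =>
      induction j using Fin.cases with
      | zero => simp [Equiv.swap_apply_right]
      | succ j2 =>
        have h0 : (j2.succ.succ : Fin (t.length + 1 + 1)) ≠ 0 := Fin.succ_ne_zero _
        have h1 : (j2.succ.succ : Fin (t.length + 1 + 1)) ≠ 1 := by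
          rw [← Fin.succ_zero_eq_one]
          exact fun h => Fin.succ_ne_zero _ (Fin.succ_injective _ h)
        have h2 : (y :: x :: t).get j2.succ.succ = (x :: y :: t).get j2.succ.succ := by simp
        exact h2.trans (congrArg _ (Equiv.swap_apply_of_ne_of_ne h0 h1).symm)
  | trans h1 h2 ih1 ih2 =>
    obtain ⟨σ1, hσ1⟩ := ih1
    obtain ⟨σ2, hσ2⟩ := ih2
    exact ⟨σ1.trans σ2, fun q => (hσ1 q).trans (hσ2 _)⟩

end CNAux
namespace CNAux

def gl (l : List ℕ) : Fin l.length → ℚ := fun q => ((l.get q : ℕ) : ℚ)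

def Nm (lam μ : Multiset ℕ) : ℚ := Ninj (fun i => lam.toList.get i) (gl μ.toList)

lemma msymEval_eq_Nm (lam μ : Multiset ℕ) :
    msymEval lam μ
      = (∏ j ∈ lam.toFinset, ((lam.count j).factorial : ℚ))⁻¹ * Nm lam μ := rfl

lemma Ninj_perm {r : ℕ} (f : Fin r → ℕ) {l1 l2 : List ℕ} (h : l1.Perm l2) :
    Ninj f (gl l1) = Ninj f (gl l2) := by
  obtain ⟨σ, hσ⟩ := perm_get_equiv h
  exact Ninj_congr f _ _ σ (fun q => by simp only [gl]; rw [hσ q])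

lemma sum_fin_get (p : Multiset ℕ) (h : ℕ → ℚ) :
    ∑ q : Fin p.toList.length, h (p.toList.get q)
      = ∑ i ∈ p.toFinset, (p.count i : ℚ) * h i := by
  have h1 : ∀ l : List ℕ, ∑ q : Fin l.length, h (l.get q) = (l.map h).sum := by
    intro l
    induction l with
    | nil => simp
    | cons a t ih =>
      show ∑ q : Fin (t.length + 1), h ((a :: t).get q) = _
      rw [Fin.sum_univ_succ]
      simp [ih]
  rw [h1]
  have h2 : (p.toList.map h).sum = (p.map h).sum := by
    conv_rhs => rw [← Multiset.coe_toList p]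
    rw [Multiset.map_coe, Multiset.sum_coe]
  rw [h2, Finset.sum_multiset_map_count]
  exact Finset.sum_congr rfl fun i _ => by rw [nsmul_eq_mul]

lemma erase_toList_eq (p : Multiset ℕ) (q : Fin p.toList.length) :
    (p.erase (p.toList.get q)) = ((p.toList.eraseIdx (q : ℕ) : List ℕ) : Multiset ℕ) := by
  have h := List.erase_getElem (l := p.toList) (i := (q : ℕ)) q.isLt
  calc p.erase (p.toList.get q)
      = ((p.toList : Multiset ℕ)).erase (p.toList.get q) :=
        congrArg (fun m : Multiset ℕ => m.erase (p.toList.get q)) (Multiset.coe_toList p).symm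
    _ = ((p.toList.erase (p.toList.get q) : List ℕ) : Multiset ℕ) := Multiset.coe_erase _ _
    _ = _ := Multiset.coe_eq_coe.mpr (by simpa using h)

lemma Nm_key (lam p : Multiset ℕ) :
    ∑ i ∈ p.toFinset, (p.count i : ℚ) * Nm lam (p.erase i)
      = ((Multiset.card p : ℚ) - (Multiset.card lam : ℚ)) * Nm lam p := by
  have hrcard : lam.toList.length = Multiset.card lam := Multiset.length_toList lam
  rcases hn : p.toList.length with _ | n
  · have hp0 : p = 0 := by rwa [List.length_eq_zero_iff, Multiset.toList_eq_nil] at hn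
    subst hp0
    simp only [Multiset.toFinset_zero, Finset.sum_empty, Multiset.card_zero, Nat.cast_zero,
      zero_sub]
    rcases Nat.eq_zero_or_pos (Multiset.card lam) with h | h
    · rw [h]; simp
    · have hz : Nm lam 0 = 0 := by
        apply Ninj_of_lt
        have h0 : (0 : Multiset ℕ).toList.length = 0 := by simp
        omega
      rw [hz]; ring
  · set g' : Fin (n + 1) → ℚ := fun q => gl p.toList (Fin.cast hn.symm q) with hg'
    have hcastback : ∀ q : Fin p.toList.length, Fin.cast hn.symm (Fin.cast hn q) = q := by
      intro q; ext; simp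
    have e1 : Nm lam p = Ninj (fun i => lam.toList.get i) g' := by
      apply Ninj_congr _ _ _ (finCongr hn)
      intro q
      simp only [hg', finCongr_apply, hcastback q]
    have e2 : ∀ q' : Fin (n + 1),
        Ninj (fun i => lam.toList.get i) (g' ∘ q'.succAbove)
          = Nm lam (p.erase (p.toList.get (Fin.cast hn.symm q'))) := by
      intro q'
      have hq : (q' : ℕ) < p.toList.length := by rw [hn]; exact q'.isLt
      have hlen : (p.toList.eraseIdx (q' : ℕ)).length = n := by
        rw [List.length_eraseIdx, if_pos hq, hn]
        omega
      have ha : Ninj (fun i => lam.toList.get i) (g' ∘ q'.succAbove)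
          = Ninj (fun i => lam.toList.get i) (gl (p.toList.eraseIdx (q' : ℕ))) := by
        apply Ninj_congr _ _ _ (finCongr hlen.symm)
        intro j
        simp only [Function.comp, hg', gl, finCongr_apply]
        rw [List.get_eq_getElem, List.get_eq_getElem, List.getElem_eraseIdx]
        have hval : ((Fin.cast hn.symm (q'.succAbove j)) : ℕ) = ((q'.succAbove j) : ℕ) := rfl
        have hvj : ((Fin.cast hlen.symm j) : ℕ) = (j : ℕ) := rfl
        rcases lt_or_ge (j : ℕ) (q' : ℕ) with hj | hj
        · have h1 : q'.succAbove j = j.castSucc := by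
            rw [Fin.succAbove]
            rw [if_pos]
            rwa [Fin.lt_def]
          rw [dif_pos (by simpa using hj)]
          simp [hval, h1]
        · have h1 : q'.succAbove j = j.succ := by
            rw [Fin.succAbove]
            rw [if_neg]
            rw [Fin.lt_def]
            simp only [Fin.coe_castSucc]
            omega
          rw [dif_neg (by simpa using not_lt.mpr hj)]
          simp [hval, h1]
      rw [ha]
      have hperm : (p.toList.eraseIdx (q' : ℕ)).Perm
          ((p.erase (p.toList.get (Fin.cast hn.symm q'))).toList) := by
        rw [← Multiset.coe_eq_coe, Multiset.coe_toList]
        exact (erase_toList_eq p (Fin.cast hn.symm q')).symm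
      exact (Ninj_perm _ hperm)
    calc ∑ i ∈ p.toFinset, (p.count i : ℚ) * Nm lam (p.erase i)
        = ∑ q : Fin p.toList.length, Nm lam (p.erase (p.toList.get q)) :=
          (sum_fin_get p (fun i => Nm lam (p.erase i))).symm
      _ = ∑ q' : Fin (n + 1), Nm lam (p.erase (p.toList.get (Fin.cast hn.symm q'))) := by
          apply Fintype.sum_equiv (finCongr hn)
          intro q
          simp only [finCongr_apply]
          rw [hcastback q]
      _ = ∑ q' : Fin (n + 1), Ninj (fun i => lam.toList.get i) (g' ∘ q'.succAbove) :=
          Finset.sum_congr rfl fun q' _ => (e2 q').symm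
      _ = ((n + 1 : ℚ) - (lam.toList.length : ℚ)) * Ninj (fun i => lam.toList.get i) g' :=
          sum_Ninj_succAbove _ g'
      _ = ((Multiset.card p : ℚ) - (Multiset.card lam : ℚ)) * Nm lam p := by
          rw [← e1, hrcard]
          have hcp : Multiset.card p = n + 1 := by rw [← Multiset.length_toList, hn]
          rw [hcp]
          push_cast
          ring

lemma key_count (lam p : Multiset ℕ) :
    ∑ i ∈ p.toFinset, (p.count i : ℚ) * msymEval lam (p.erase i)
      = ((Multiset.card p : ℚ) - (Multiset.card lam : ℚ)) * msymEval lam p := by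
  simp only [msymEval_eq_Nm]
  have h1 : ∑ i ∈ p.toFinset, (p.count i : ℚ)
        * ((∏ j ∈ lam.toFinset, ((lam.count j).factorial : ℚ))⁻¹ * Nm lam (p.erase i))
      = (∏ j ∈ lam.toFinset, ((lam.count j).factorial : ℚ))⁻¹
        * ∑ i ∈ p.toFinset, (p.count i : ℚ) * Nm lam (p.erase i) := by
    rw [Finset.mul_sum]
    exact Finset.sum_congr rfl fun i _ => by ring
  rw [h1, Nm_key]
  ring

end CNAux
namespace CNAux

def gx (i : ℕ) : A := MvPolynomial.C ((i : ℚ) - 1) * MvPolynomial.X i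

def M2 (k : ℕ) : Finset (Multiset ℕ) := (P2 k).image Nat.Partition.parts

lemma mem_M2 {k : ℕ} {m : Multiset ℕ} :
    m ∈ M2 k ↔ (∀ i ∈ m, 2 ≤ i) ∧ m.sum = k := by
  constructor
  · intro hm
    obtain ⟨μ, hμ, rfl⟩ := Finset.mem_image.mp hm
    rw [P2, Finset.mem_filter] at hμ
    exact ⟨hμ.2, μ.parts_sum⟩
  · rintro ⟨h2, hsum⟩
    refine Finset.mem_image.mpr ⟨⟨m, fun {i} hi => by have := h2 i hi; omega, hsum⟩, ?_, rfl⟩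
    rw [P2, Finset.mem_filter]
    exact ⟨Finset.mem_univ _, h2⟩

lemma sum_P2 {β : Type*} [AddCommMonoid β] (k : ℕ) (F : Multiset ℕ → β) :
    ∑ μ ∈ P2 k, F μ.parts = ∑ m ∈ M2 k, F m := by
  rw [M2, Finset.sum_image]
  intro x _ y _ h
  exact Nat.Partition.ext h

lemma factorial_prod_erase {m : Multiset ℕ} {i : ℕ} (hi : i ∈ m) :
    (∏ j ∈ m.toFinset, ((m.count j).factorial : ℚ))
      = (m.count i : ℚ) * ∏ j ∈ (m.erase i).toFinset, (((m.erase i).count j).factorial : ℚ) := by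
  have hsub : (m.erase i).toFinset ⊆ m.toFinset :=
    Multiset.toFinset_subset.mpr (Multiset.subset_of_le (Multiset.erase_le i m))
  have hext : ∏ j ∈ (m.erase i).toFinset, (((m.erase i).count j).factorial : ℚ)
      = ∏ j ∈ m.toFinset, (((m.erase i).count j).factorial : ℚ) := by
    apply Finset.prod_subset hsub
    intro j _ hj
    have h0 : (m.erase i).count j = 0 :=
      Multiset.count_eq_zero.mpr (fun hmem => hj (Multiset.mem_toFinset.mpr hmem))
    rw [h0]
    norm_num
  rw [hext]
  have him : i ∈ m.toFinset := Multiset.mem_toFinset.mpr hi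
  rw [← Finset.mul_prod_erase _ _ him, ← Finset.mul_prod_erase _ (fun j => (((m.erase i).count j).factorial : ℚ)) him]
  have hcount : ∀ j ∈ m.toFinset.erase i, (m.erase i).count j = m.count j := by
    intro j hj
    exact Multiset.count_erase_of_ne (Finset.ne_of_mem_erase hj) m
  have hc1 : 1 ≤ m.count i := Multiset.count_pos.mpr hi
  rw [Multiset.count_erase_self]
  have hfac : ((m.count i).factorial : ℚ)
      = (m.count i : ℚ) * (((m.count i - 1)).factorial : ℚ) := by
    have h3 : m.count i = (m.count i - 1) + 1 := by omega
    calc ((m.count i).factorial : ℚ) = ((((m.count i - 1) + 1)).factorial : ℚ) := by rw [← h3]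
      _ = ((((m.count i - 1) + 1) : ℕ) : ℚ) * (((m.count i - 1)).factorial : ℚ) := by
          rw [Nat.factorial_succ]; push_cast; ring
      _ = (m.count i : ℚ) * (((m.count i - 1)).factorial : ℚ) := by rw [← h3]
  rw [hfac]
  have hrest : ∏ j ∈ m.toFinset.erase i, ((m.count j).factorial : ℚ)
      = ∏ j ∈ m.toFinset.erase i, (((m.erase i).count j).factorial : ℚ) :=
    Finset.prod_congr rfl fun j hj => by rw [hcount j hj]
  rw [hrest]
  ring

lemma gx_mul_Rmu_erase {m : Multiset ℕ} {i : ℕ} (hi : i ∈ m) :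
    gx i * Rmu (m.erase i) = (m.count i : ℚ) • Rmu m := by
  rw [Rmu, Rmu, gx]
  have hprod : (m.map fun j : ℕ => (MvPolynomial.C ((j : ℚ) - 1) : A) * MvPolynomial.X j).prod
      = (MvPolynomial.C ((i : ℚ) - 1) * MvPolynomial.X i)
        * ((m.erase i).map fun j : ℕ => (MvPolynomial.C ((j : ℚ) - 1) : A) * MvPolynomial.X j).prod := by
    conv_lhs => rw [← Multiset.cons_erase hi]
    rw [Multiset.map_cons, Multiset.prod_cons]
  rw [mul_smul_comm, smul_smul, hprod]
  congr 1
  rw [factorial_prod_erase hi, mul_inv]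
  have hc : (m.count i : ℚ) ≠ 0 :=
    Nat.cast_ne_zero.mpr (Nat.pos_iff_ne_zero.mp (Multiset.count_pos.mpr hi))
  field_simp

lemma coeff_niceSeries (s : ℕ) (f : Multiset ℕ → ℚ) (k : ℕ) :
    PowerSeries.coeff k (niceSeries s f)
      = ∑ m ∈ M2 k, (((Multiset.card m + s - 2).factorial : ℚ) * f m) • Rmu m := by
  rw [niceSeries, PowerSeries.coeff_mk]
  exact sum_P2 k (fun m => (((Multiset.card m + s - 2).factorial : ℚ) * f m) • Rmu m)

lemma coeff_Sser (i : ℕ) :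
    PowerSeries.coeff i Sser = if 2 ≤ i then gx i else 0 := by
  rw [Sser, PowerSeries.coeff_mk]
  rfl

lemma constantCoeff_one_sub_Sser : PowerSeries.constantCoeff (1 - Sser) = 1 := by
  rw [map_sub, map_one]
  have : PowerSeries.constantCoeff Sser = 0 := by
    rw [← PowerSeries.coeff_zero_eq_constantCoeff_apply, coeff_Sser]
    norm_num
  rw [this, sub_zero]

end CNAux
set_option maxHeartbeats 1000000
attribute [irreducible] CNAux.M2 CNAux.gx Rmu Sser niceSeries msymEval
/-- Lemma 2.3 (c), nice case: if `F` is the nice series of parameter `s` associated with a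
symmetric function `f` of degree at most `d`, then `C(t)·F(t)` is the nice series of
parameter `s+1` associated with some symmetric function `f'` of degree at most `d`. -/
theorem C_mul_nice (s d : ℕ) (hs : 2 ≤ s) (f : Multiset ℕ → ℚ) (hf : IsSymmFunc d f) :
    ∃ f' : Multiset ℕ → ℚ, IsSymmFunc d f' ∧
      Cser * niceSeries s f = niceSeries (s + 1) f' := by
  classical
  obtain ⟨c, hsup, hcf⟩ := hf
  have hD : ∀ lam : Multiset ℕ, ((Multiset.card lam + s - 1 : ℕ) : ℚ) ≠ 0 :=
    fun lam => Nat.cast_ne_zero.mpr (by omega)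
  set f' : Multiset ℕ → ℚ := fun μ =>
    ∑ lam ∈ c.support, (c lam / ((Multiset.card lam + s - 1 : ℕ) : ℚ)) * msymEval lam μ
    with hf'
  refine ⟨f', ?_, ?_⟩
  · refine ⟨⟨c.support, fun lam => c lam / ((Multiset.card lam + s - 1 : ℕ) : ℚ), ?_⟩, ?_, ?_⟩
    · intro lam
      rw [Finsupp.mem_support_iff, div_ne_zero_iff]
      exact ⟨fun h => ⟨h, hD lam⟩, fun h => h.1⟩
    · intro lam hlam
      exact hsup lam hlam
    · intro μ
      rfl
  · have hC : (1 - Sser) * Cser = 1 := by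
      rw [Cser]
      exact PowerSeries.mul_invOfUnit (1 - Sser) 1
        (by rw [CNAux.constantCoeff_one_sub_Sser]; rfl)
    have harg : ∀ t : ℕ, t + (s + 1) - 2 = t + s - 1 := fun t => by omega
    have key : ∀ k : ℕ, PowerSeries.coeff k (niceSeries (s + 1) f')
        = PowerSeries.coeff k (niceSeries s f)
          + PowerSeries.coeff k (Sser * niceSeries (s + 1) f') := by
      intro k
      have hG : ∀ j : ℕ, PowerSeries.coeff j (niceSeries (s + 1) f')
          = ∑ m ∈ CNAux.M2 j,
              (((Multiset.card m + s - 1).factorial : ℚ) * f' m) • Rmu m := by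
        intro j
        rw [CNAux.coeff_niceSeries]
        simp only [harg]
      have hSG : PowerSeries.coeff k (Sser * niceSeries (s + 1) f')
          = ∑ p ∈ CNAux.M2 k, ∑ i ∈ p.toFinset,
              CNAux.gx i * ((((Multiset.card (p.erase i) + s - 1).factorial : ℚ)
                * f' (p.erase i)) • Rmu (p.erase i)) := by
        rw [PowerSeries.coeff_mul]
        calc ∑ x ∈ Finset.HasAntidiagonal.antidiagonal k,
              PowerSeries.coeff x.1 Sser * PowerSeries.coeff x.2 (niceSeries (s + 1) f')
            = ∑ x ∈ Finset.HasAntidiagonal.antidiagonal k,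
                (if 2 ≤ x.1 then
                  CNAux.gx x.1 * PowerSeries.coeff x.2 (niceSeries (s + 1) f') else 0) := by
              refine Finset.sum_congr rfl fun x _ => ?_
              rw [CNAux.coeff_Sser, ite_mul, zero_mul]
          _ = ∑ x ∈ (Finset.HasAntidiagonal.antidiagonal k).filter (fun x => 2 ≤ x.1),
                CNAux.gx x.1 * PowerSeries.coeff x.2 (niceSeries (s + 1) f') :=
              (Finset.sum_filter _ _).symm
          _ = ∑ x ∈ (Finset.HasAntidiagonal.antidiagonal k).filter (fun x => 2 ≤ x.1),
                ∑ m ∈ CNAux.M2 x.2,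
                  CNAux.gx x.1 * ((((Multiset.card m + s - 1).factorial : ℚ) * f' m) • Rmu m) := by
              refine Finset.sum_congr rfl fun x _ => ?_
              rw [hG x.2, Finset.mul_sum]
          _ = ∑ z ∈ ((Finset.HasAntidiagonal.antidiagonal k).filter (fun x => 2 ≤ x.1)).sigma
                  (fun x => CNAux.M2 x.2),
                CNAux.gx z.1.1 * ((((Multiset.card z.2 + s - 1).factorial : ℚ) * f' z.2) • Rmu z.2) :=
              Finset.sum_sigma' ((Finset.HasAntidiagonal.antidiagonal k).filter (fun x => 2 ≤ x.1))
                (fun x => CNAux.M2 x.2)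
                (fun x m => CNAux.gx x.1
                  * ((((Multiset.card m + s - 1).factorial : ℚ) * f' m) • Rmu m))
          _ = ∑ z ∈ (CNAux.M2 k).sigma (fun p => p.toFinset),
                CNAux.gx z.2 * ((((Multiset.card (z.1.erase z.2) + s - 1).factorial : ℚ)
                  * f' (z.1.erase z.2)) • Rmu (z.1.erase z.2)) := by
              refine Finset.sum_bij'
                (fun z _ => (⟨z.1.1 ::ₘ z.2, z.1.1⟩ : Σ _ : Multiset ℕ, ℕ))
                (fun z _ => (⟨(z.2, k - z.2), z.1.erase z.2⟩ : Σ _ : ℕ × ℕ, Multiset ℕ))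
                ?_ ?_ ?_ ?_ ?_
              · rintro ⟨⟨a, b⟩, m⟩ hz
                rw [Finset.mem_sigma, Finset.mem_filter, Finset.HasAntidiagonal.mem_antidiagonal] at hz
                dsimp only at hz
                obtain ⟨⟨hab, ha2⟩, hm⟩ := hz
                obtain ⟨hm2, hmsum⟩ := CNAux.mem_M2.mp hm
                rw [Finset.mem_sigma]
                constructor
                · rw [CNAux.mem_M2]
                  constructor
                  · intro j hj
                    rcases Multiset.mem_cons.mp hj with rfl | hj
                    · exact ha2
                    · exact hm2 j hj
                  · rw [Multiset.sum_cons, hmsum]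
                    exact hab
                · rw [Multiset.mem_toFinset]
                  exact Multiset.mem_cons_self _ _
              · rintro ⟨p, i⟩ hz
                dsimp only
                rw [Finset.mem_sigma] at hz
                dsimp only at hz
                obtain ⟨hp, hi⟩ := hz
                obtain ⟨hp2, hpsum⟩ := CNAux.mem_M2.mp hp
                have hip : i ∈ p := Multiset.mem_toFinset.mp hi
                have hsum2 : i + (p.erase i).sum = p.sum := by
                  conv_rhs => rw [← Multiset.cons_erase hip]
                  rw [Multiset.sum_cons]
                rw [Finset.mem_sigma, Finset.mem_filter, Finset.HasAntidiagonal.mem_antidiagonal]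
                dsimp only
                refine ⟨⟨by omega, hp2 i hip⟩, ?_⟩
                rw [CNAux.mem_M2]
                refine ⟨fun j hj => hp2 j (Multiset.mem_of_mem_erase hj), by omega⟩
              · rintro ⟨⟨a, b⟩, m⟩ hz
                dsimp only
                rw [Finset.mem_sigma, Finset.mem_filter, Finset.HasAntidiagonal.mem_antidiagonal] at hz
                dsimp only at hz
                obtain ⟨⟨hab, _⟩, _⟩ := hz
                have hb : k - a = b := by omega
                rw [Multiset.erase_cons_head, hb]
              · rintro ⟨p, i⟩ hz
                dsimp only
                rw [Finset.mem_sigma] at hz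
                dsimp only at hz
                have hip : i ∈ p := Multiset.mem_toFinset.mp hz.2
                rw [Multiset.cons_erase hip]
              · rintro ⟨⟨a, b⟩, m⟩ _
                dsimp only
                rw [Multiset.erase_cons_head]
          _ = ∑ p ∈ CNAux.M2 k, ∑ i ∈ p.toFinset,
                CNAux.gx i * ((((Multiset.card (p.erase i) + s - 1).factorial : ℚ)
                  * f' (p.erase i)) • Rmu (p.erase i)) :=
              Finset.sum_sigma (CNAux.M2 k) (fun p => p.toFinset)
                (fun z => CNAux.gx z.2 * ((((Multiset.card (z.1.erase z.2) + s - 1).factorial : ℚ)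
                  * f' (z.1.erase z.2)) • Rmu (z.1.erase z.2)))
      rw [hG k, CNAux.coeff_niceSeries, hSG, ← Finset.sum_add_distrib]
      refine Finset.sum_congr rfl fun p hp => ?_
      obtain ⟨hp2, hpsum⟩ := CNAux.mem_M2.mp hp
      have hterm : ∀ i ∈ p.toFinset,
          CNAux.gx i * ((((Multiset.card (p.erase i) + s - 1).factorial : ℚ)
              * f' (p.erase i)) • Rmu (p.erase i))
            = ((((Multiset.card p + s - 2).factorial : ℚ) * f' (p.erase i))
                * (p.count i : ℚ)) • Rmu p := by
        intro i hi
        have hip : i ∈ p := Multiset.mem_toFinset.mp hi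
        have hpos : 0 < Multiset.card p := Multiset.card_pos.mpr (by rintro rfl; simp at hip)
        have hcard : Multiset.card (p.erase i) + s - 1 = Multiset.card p + s - 2 := by
          rw [Multiset.card_erase_of_mem hip, Nat.pred_eq_sub_one]
          omega
        rw [hcard, mul_smul_comm, CNAux.gx_mul_Rmu_erase hip, smul_smul]
      rw [Finset.sum_congr rfl hterm, ← Finset.sum_smul, ← add_smul]
      congr 1
      have h2 : ((Multiset.card p + s - 1 : ℕ) : ℚ) * f' p
          = f p + ∑ i ∈ p.toFinset, (p.count i : ℚ) * f' (p.erase i) := by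
        rw [hcf p]
        simp only [hf']
        rw [Finset.mul_sum]
        have hswap : ∑ i ∈ p.toFinset, (p.count i : ℚ)
              * ∑ lam ∈ c.support,
                  (c lam / ((Multiset.card lam + s - 1 : ℕ) : ℚ)) * msymEval lam (p.erase i)
            = ∑ lam ∈ c.support, (c lam / ((Multiset.card lam + s - 1 : ℕ) : ℚ))
                * ∑ i ∈ p.toFinset, (p.count i : ℚ) * msymEval lam (p.erase i) := by
          simp_rw [Finset.mul_sum]
          rw [Finset.sum_comm]
          exact Finset.sum_congr rfl fun lam _ => Finset.sum_congr rfl fun i _ => by ring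
        rw [hswap, ← Finset.sum_add_distrib]
        refine Finset.sum_congr rfl fun lam _ => ?_
        rw [CNAux.key_count lam p]
        have hc1 : ((Multiset.card p + s - 1 : ℕ) : ℚ) = (Multiset.card p : ℚ) + s - 1 := by
          rw [Nat.cast_sub (by omega)]
          push_cast
          ring
        have hc2 : ((Multiset.card lam + s - 1 : ℕ) : ℚ) = (Multiset.card lam : ℚ) + s - 1 := by
          rw [Nat.cast_sub (by omega)]
          push_cast
          ring
        have hD2 : (Multiset.card lam : ℚ) + s - 1 ≠ 0 := by
          rw [← hc2]
          exact hD lam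
        rw [hc1, hc2]
        field_simp
        ring
      have hfacQ : ((Multiset.card p + s - 1).factorial : ℚ)
          = ((Multiset.card p + s - 2).factorial : ℚ) * ((Multiset.card p + s - 1 : ℕ) : ℚ) := by
        have h3 : Multiset.card p + s - 1 = (Multiset.card p + s - 2) + 1 := by omega
        rw [h3, Nat.factorial_succ]
        push_cast
        ring
      have h4 : ∑ i ∈ p.toFinset,
            (((Multiset.card p + s - 2).factorial : ℚ) * f' (p.erase i) * (p.count i : ℚ))
          = ((Multiset.card p + s - 2).factorial : ℚ)
            * ∑ i ∈ p.toFinset, (p.count i : ℚ) * f' (p.erase i) := by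
        rw [Finset.mul_sum]
        exact Finset.sum_congr rfl fun i _ => by ring
      rw [h4, hfacQ, mul_assoc, h2, mul_add]
    have hGid : (1 - Sser) * niceSeries (s + 1) f' = niceSeries s f := by
      ext k
      rw [sub_mul, one_mul, map_sub, key k]
      ring
    calc Cser * niceSeries s f = Cser * ((1 - Sser) * niceSeries (s + 1) f') := by rw [hGid]
      _ = ((1 - Sser) * Cser) * niceSeries (s + 1) f' := by ring
      _ = niceSeries (s + 1) f' := by rw [hC, one_mul]

end
end

section
/- Let p be an odd prime. Then for every finitely supported function s : {2,3,…} → ℕ, the integer N_p(s) − [s = e_{p+1}] + 2·[s = e_2] is nonnegative and divisible by p (here [·] equals 1 when the condition holds and 0 otherwise). Equivalently, (Σ_p − R_{p+1} + 2R_2)/p is a polynomial in the free cumulants R_2, R_3, … with nonnegative integer coefficients. -/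
noncomputable section

/-- The cycle of the permutation `σ` containing the point `x`, viewed as the set of points
in the same cycle as `x` (a fixed point gives a singleton cycle). -/
def cycOf {k : ℕ} (σ : Equiv.Perm (Fin k)) (x : Fin k) : Finset (Fin k) :=
  Finset.univ.filter fun y => σ.SameCycle x y

/-- The set `C(σ)` of cycles of `σ`, including fixed points: each cycle is recorded as the
set of its points, i.e. as an orbit of `σ`. -/
def cyclesOf {k : ℕ} (σ : Equiv.Perm (Fin k)) : Finset (Finset (Fin k)) :=
  Finset.image (cycOf σ) Finset.univ

/-- The conditions of the Dołęga–Féray–Śniady theorem on a triple `(σ₁, σ₂, q)`: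
(a) `σ₁ ∘ σ₂` is the long cycle `(1,2,…,k)`;
(b) the number of cycles of `σ₂` equals `Σᵢ sᵢ`;
(c) the total number of cycles of `σ₁` and `σ₂` equals `Σᵢ i·sᵢ`;
(d) the coloring `q : C(σ₂) → {2,3,…}` uses each color `i` exactly `sᵢ` times;
(e) for every nontrivial `A ⊆ C(σ₂)`, more than `Σ_{c∈A}(q(c)−1)` cycles of `σ₁`
    intersect `⋃ A`. -/
def KerovTripleCond {k : ℕ} (s : ℕ →₀ ℕ) (σ₁ σ₂ : Equiv.Perm (Fin k))
    (q : {c // c ∈ cyclesOf σ₂} → ℕ) : Prop :=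
  σ₁ * σ₂ = finRotate k ∧
  (cyclesOf σ₂).card = ∑ i ∈ s.support, s i ∧
  (cyclesOf σ₁).card + (cyclesOf σ₂).card = ∑ i ∈ s.support, i * s i ∧
  (∀ c, 2 ≤ q c) ∧
  (∀ i : ℕ, Nat.card {c // q c = i} = s i) ∧
  ∀ A : Finset {c // c ∈ cyclesOf σ₂}, A.Nonempty → A ≠ Finset.univ →
    ∑ c ∈ A, (q c - 1) <
      ((cyclesOf σ₁).filter fun o => ∃ c ∈ A, (o ∩ (c : Finset (Fin k))).Nonempty).card

/-- `N_k(s)`: the number of triples `(σ₁, σ₂, q)` as in the Dołęga–Féray–Śniady theorem;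
it equals the coefficient of `∏ᵢ Rᵢ^{sᵢ}` in the Kerov character polynomial `K_k`. -/
def Nkerov (k : ℕ) (s : ℕ →₀ ℕ) : ℕ :=
  Nat.card {T : Σ σ : Equiv.Perm (Fin k) × Equiv.Perm (Fin k),
      {c // c ∈ cyclesOf σ.2} → ℕ // KerovTripleCond s T.1.1 T.1.2 T.2}


open Equiv Equiv.Perm Finset

variable {k : ℕ} {σ τ : Perm (Fin k)}

lemma mem_cycOf {x y : Fin k} : y ∈ cycOf σ x ↔ σ.SameCycle x y := by
  simp [cycOf]

lemma self_mem_cycOf (x : Fin k) : x ∈ cycOf σ x := mem_cycOf.2 (Equiv.Perm.SameCycle.refl _ _)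

lemma cycOf_eq_of_sameCycle {x y : Fin k} (h : σ.SameCycle x y) : cycOf σ x = cycOf σ y := by
  ext z; simp only [mem_cycOf]
  exact ⟨fun hz => h.symm.trans hz, fun hz => h.trans hz⟩

lemma mem_cyclesOf {t : Finset (Fin k)} : t ∈ cyclesOf σ ↔ ∃ x, cycOf σ x = t := by
  simp [cyclesOf]

lemma cycOf_conj (x : Fin k) : cycOf (τ * σ * τ⁻¹) (τ x) = (cycOf σ x).image τ := by
  ext y
  simp only [mem_cycOf, Finset.mem_image, sameCycle_conj, (Perm.inv_eq_iff_eq.2 rfl : τ⁻¹ (τ x) = x)]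
  constructor
  · intro h; exact ⟨τ⁻¹ y, h, by simp⟩
  · rintro ⟨z, hz, rfl⟩; simpa using hz

lemma cyclesOf_conj : cyclesOf (τ * σ * τ⁻¹) = (cyclesOf σ).image (Finset.image τ) := by
  unfold cyclesOf
  rw [Finset.image_image]
  have h1 : (Finset.univ : Finset (Fin k)) = Finset.univ.image τ := by
    rw [Finset.image_univ_equiv]
  conv_lhs => rw [h1]
  rw [Finset.image_image]
  apply Finset.image_congr
  intro x _
  exact cycOf_conj x

lemma card_cyclesOf_conj : (cyclesOf (τ * σ * τ⁻¹)).card = (cyclesOf σ).card := by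
  rw [cyclesOf_conj]
  exact Finset.card_image_of_injective _ (Finset.image_injective τ.injective)

lemma image_image_inv (d : Finset (Fin k)) : (d.image (τ⁻¹ : Perm (Fin k))).image τ = d := by
  ext z; simp [Finset.mem_image]

lemma image_inv_image (d : Finset (Fin k)) : (d.image τ).image (τ⁻¹ : Perm (Fin k)) = d := by
  ext z; simp [Finset.mem_image]

lemma image_inv_mem_cyclesOf {d : Finset (Fin k)} (hd : d ∈ cyclesOf (τ * σ * τ⁻¹)) :
    d.image (τ⁻¹ : Perm (Fin k)) ∈ cyclesOf σ := by
  rw [cyclesOf_conj] at hd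
  obtain ⟨e, he, rfl⟩ := Finset.mem_image.1 hd
  rwa [image_inv_image]

/-- cyclesOf of the identity -/
lemma cyclesOf_one : cyclesOf (1 : Perm (Fin k)) = Finset.univ.image (fun x => {x}) := by
  unfold cyclesOf
  apply Finset.image_congr
  intro x _
  ext y; simp [mem_cycOf, sameCycle_one, eq_comm]

lemma card_cyclesOf_one : (cyclesOf (1 : Perm (Fin k))).card = k := by
  have hi : Function.Injective (fun x : Fin k => ({x} : Finset (Fin k))) :=
    fun a b h => Finset.singleton_injective h
  rw [cyclesOf_one]
  rw [Finset.card_image_of_injective _ hi]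
  rw [Finset.card_univ]
  rw [Fintype.card_fin]

lemma eq_one_of_card_cyclesOf (h : (cyclesOf σ).card = k) : σ = 1 := by
  have h2 : (Finset.image (cycOf σ) Finset.univ).card = (Finset.univ : Finset (Fin k)).card := by
    rw [show Finset.image (cycOf σ) Finset.univ = cyclesOf σ from rfl, h, Finset.card_univ,
      Fintype.card_fin]
  have hinj := Finset.card_image_iff.1 h2
  ext x
  have hsc : cycOf σ x = cycOf σ (σ x) := cycOf_eq_of_sameCycle ⟨1, by simp⟩
  have := hinj (by simp : (σ x) ∈ ((Finset.univ : Finset (Fin k)) : Set (Fin k)))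
    (by simp : x ∈ ((Finset.univ : Finset (Fin k)) : Set (Fin k))) hsc.symm
  simp [this]

lemma cyclesOf_eq_singleton_univ (hk : 0 < k) (h : ∀ x y, σ.SameCycle x y) :
    cyclesOf σ = {Finset.univ} := by
  have hall : ∀ x : Fin k, cycOf σ x = Finset.univ := by
    intro x; ext y; simp [mem_cycOf, h x y]
  unfold cyclesOf
  rw [Finset.image_congr (fun x _ => hall x)]
  have : Nonempty (Fin k) := Fin.pos_iff_nonempty.1 hk
  exact Finset.image_const Finset.univ_nonempty _


open Equiv Equiv.Perm Finset

variable {p : ℕ}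

lemma orderOf_finRotate' (hp : 2 ≤ p) : orderOf (finRotate p) = p := by
  rw [(isCycle_finRotate_of_le hp).orderOf, support_finRotate_of_le hp, Finset.card_univ,
    Fintype.card_fin]

lemma finRotate_pow_p (hp : 2 ≤ p) : (finRotate p) ^ (p : ℕ) = 1 := by
  have h1 : (finRotate p) ^ orderOf (finRotate p) = 1 := pow_orderOf_eq_one _
  rwa [orderOf_finRotate' hp] at h1

lemma sameCycle_finRotate_all (hp : 2 ≤ p) (x y : Fin p) : (finRotate p).SameCycle x y := by
  have hc := isCycle_finRotate_of_le hp
  have hx : finRotate p x ≠ x := by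
    have h1 : x ∈ (finRotate p).support := by
      rw [support_finRotate_of_le hp]; exact Finset.mem_univ x
    exact Equiv.Perm.mem_support.1 h1
  have hy : finRotate p y ≠ y := by
    have h1 : y ∈ (finRotate p).support := by
      rw [support_finRotate_of_le hp]; exact Finset.mem_univ y
    exact Equiv.Perm.mem_support.1 h1
  exact hc.sameCycle hx hy

lemma eq_zpow_of_commute (hp : 2 ≤ p) {g : Perm (Fin p)}
    (h : Commute g (finRotate p)) : ∃ m : ℤ, g = (finRotate p) ^ m := by
  have hpos : 0 < p := by omega
  let x0 : Fin p := ⟨0, hpos⟩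
  obtain ⟨m, hm⟩ := sameCycle_finRotate_all hp x0 (g x0)
  refine ⟨m, ?_⟩
  apply Equiv.ext; intro x
  obtain ⟨n, rfl⟩ := sameCycle_finRotate_all hp x0 x
  have hcomm : g * (finRotate p) ^ n = (finRotate p) ^ n * g := (Commute.zpow_right h n).eq
  calc g (((finRotate p) ^ n) x0) = (g * (finRotate p) ^ n) x0 := rfl
    _ = ((finRotate p) ^ n * g) x0 := by rw [hcomm]
    _ = ((finRotate p) ^ n) (g x0) := rfl
    _ = ((finRotate p) ^ n) (((finRotate p) ^ m) x0) := by rw [hm]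
    _ = ((finRotate p) ^ m) (((finRotate p) ^ n) x0) := by
        rw [← Equiv.Perm.mul_apply, ← Equiv.Perm.mul_apply, ← zpow_add, ← zpow_add, add_comm]

lemma sameCycle_zpow_all (hp : p.Prime) {m : ℤ} (hm : (finRotate p) ^ m ≠ 1)
    (x y : Fin p) : ((finRotate p) ^ m).SameCycle x y := by
  have hp2 : 2 ≤ p := hp.two_le
  have hord : orderOf (finRotate p) = p := orderOf_finRotate' hp2
  obtain ⟨n, hn⟩ := sameCycle_finRotate_all hp2 x y
  have hmne : (m : ZMod p) ≠ 0 := by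
    intro h0
    apply hm
    have hdvd : ((p : ℕ) : ℤ) ∣ m := by
      rwa [ZMod.intCast_zmod_eq_zero_iff_dvd] at h0
    obtain ⟨t, rfl⟩ := hdvd
    rw [zpow_mul, zpow_natCast, finRotate_pow_p hp2, one_zpow]
  haveI : Fact p.Prime := ⟨hp⟩
  haveI : NeZero p := ⟨hp.ne_zero⟩
  set kk : ZMod p := (n : ZMod p) / (m : ZMod p) with hkk
  refine ⟨(kk.val : ℤ), ?_⟩
  have hv : (((kk.val : ℕ) : ℤ) : ZMod p) = kk := by
    push_cast
    exact ZMod.natCast_rightInverse kk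
  have hmod : m * (kk.val : ℤ) ≡ n [ZMOD (p : ℕ)] := by
    have hc : ((m * (kk.val : ℤ) : ℤ) : ZMod p) = ((n : ℤ) : ZMod p) := by
      push_cast
      push_cast at hv
      rw [hv, hkk]
      field_simp
    rwa [ZMod.intCast_eq_intCast_iff] at hc
  have hpow : ((finRotate p) ^ m) ^ (kk.val : ℤ) = (finRotate p) ^ n := by
    rw [← zpow_mul, zpow_eq_zpow_iff_modEq, hord]
    exact hmod
  rw [hpow, hn]

lemma cyclesOf_zpow_eq (hp : p.Prime) {m : ℤ} (hm : (finRotate p) ^ m ≠ 1) :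
    cyclesOf ((finRotate p) ^ m) = {Finset.univ} :=
  cyclesOf_eq_singleton_univ hp.pos (sameCycle_zpow_all hp hm)


open Equiv Equiv.Perm Finset

variable {k : ℕ}

/-- equivalence between the cycles of `σ` and the cycles of a conjugate -/
def cycEquiv (τ σ : Perm (Fin k)) : {d // d ∈ cyclesOf σ} ≃ {d // d ∈ cyclesOf (τ * σ * τ⁻¹)} where
  toFun d := ⟨d.1.image τ, by rw [cyclesOf_conj]; exact Finset.mem_image_of_mem _ d.2⟩
  invFun e := ⟨e.1.image (τ⁻¹ : Perm (Fin k)), image_inv_mem_cyclesOf e.2⟩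
  left_inv d := Subtype.ext (image_inv_image d.1)
  right_inv e := Subtype.ext (image_image_inv e.1)

lemma q_congr {σ₂ : Perm (Fin k)} (q : {c // c ∈ cyclesOf σ₂} → ℕ) {a b : Finset (Fin k)}
    (h : a = b) (ha : a ∈ cyclesOf σ₂) (hb : b ∈ cyclesOf σ₂) : q ⟨a, ha⟩ = q ⟨b, hb⟩ := by
  subst h; rfl

lemma KerovTripleCond.conj {s : ℕ →₀ ℕ} {σ₁ σ₂ τ : Perm (Fin k)}
    (hτ : Commute τ (finRotate k)) {q : {c // c ∈ cyclesOf σ₂} → ℕ}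
    (h : KerovTripleCond s σ₁ σ₂ q) :
    KerovTripleCond s (τ * σ₁ * τ⁻¹) (τ * σ₂ * τ⁻¹)
      (fun e => q ((cycEquiv τ σ₂).symm e)) := by
  obtain ⟨h1, h2, h3, h4, h5, h6⟩ := h
  refine ⟨?_, ?_, ?_, fun e => h4 _, ?_, ?_⟩
  · have : τ * σ₁ * τ⁻¹ * (τ * σ₂ * τ⁻¹) = τ * (σ₁ * σ₂) * τ⁻¹ := by group
    rw [this, h1, hτ.eq, mul_inv_cancel_right]
  · rw [card_cyclesOf_conj, h2]
  · rw [card_cyclesOf_conj, card_cyclesOf_conj, h3]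
  · intro i
    rw [← h5 i]
    exact Nat.card_congr (Equiv.subtypeEquiv (cycEquiv τ σ₂).symm (fun e => Iff.rfl))
  · intro A' hA'ne hA'univ
    set E := cycEquiv τ σ₂ with hE
    set A : Finset {d // d ∈ cyclesOf σ₂} := A'.map E.symm.toEmbedding with hA
    have hAne : A.Nonempty := hA'ne.map
    have hAuniv : A ≠ Finset.univ := by
      intro hcon
      have hm : A'.map E.symm.toEmbedding = Finset.univ.map E.symm.toEmbedding := by
        rw [← hA, hcon, Finset.map_univ_equiv]
      exact hA'univ (Finset.map_injective _ hm)
    have hsum : ∑ e ∈ A', ((fun e => q (E.symm e)) e - 1) = ∑ d ∈ A, (q d - 1) := by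
      rw [hA, Finset.sum_map]
      rfl
    rw [hsum]
    have hmemA : ∀ (e : {d // d ∈ cyclesOf (τ * σ₂ * τ⁻¹)}), E.symm e ∈ A ↔ e ∈ A' := by
      intro e
      rw [hA, Finset.mem_map]
      constructor
      · rintro ⟨x, hx, hxe⟩
        have hxeq : x = e := by
          have := congrArg E hxe
          simpa using this
        exact hxeq ▸ hx
      · intro he; exact ⟨e, he, rfl⟩
    have hcard : ((cyclesOf (τ * σ₁ * τ⁻¹)).filter
          fun o => ∃ e ∈ A', (o ∩ (e : Finset (Fin k))).Nonempty).card
        = ((cyclesOf σ₁).filter fun o => ∃ d ∈ A, (o ∩ (d : Finset (Fin k))).Nonempty).card := by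
      rw [cyclesOf_conj (σ := σ₁) (τ := τ), Finset.filter_image]
      rw [Finset.card_image_of_injective _ (Finset.image_injective τ.injective)]
      congr 1
      apply Finset.filter_congr
      intro o _
      show (∃ e ∈ A', ((o.image τ) ∩ (e : Finset (Fin k))).Nonempty) ↔ _
      constructor
      · rintro ⟨e, he, hne⟩
        refine ⟨E.symm e, (hmemA e).2 he, ?_⟩
        have : ((o.image τ) ∩ (e : Finset (Fin k))) = (o ∩ ((E.symm e) : Finset (Fin k))).image τ := by
          rw [Finset.image_inter _ _ τ.injective]
          congr 1
          exact (image_image_inv (τ := τ) (e : Finset (Fin k))).symm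
        rw [this] at hne
        exact hne.of_image
      · rintro ⟨d, hd, hne⟩
        refine ⟨E d, ?_, ?_⟩
        · rw [← hmemA (E d)]
          simpa using hd
        · have : ((o.image τ) ∩ ((E d) : Finset (Fin k))) = (o ∩ (d : Finset (Fin k))).image τ := by
            rw [Finset.image_inter _ _ τ.injective]
            rfl
          rw [this]
          exact hne.image τ
    rw [hcard]
    exact h6 A hAne hAuniv


open Equiv Equiv.Perm Finset MulAction

/-- the type of Kerov triples -/
abbrev TripT (k : ℕ) (s : ℕ →₀ ℕ) :=
  {T : Σ σ : Equiv.Perm (Fin k) × Equiv.Perm (Fin k),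
      {c // c ∈ cyclesOf σ.2} → ℕ // KerovTripleCond s T.1.1 T.1.2 T.2}

lemma Nkerov_eq (k : ℕ) (s : ℕ →₀ ℕ) : Nkerov k s = Nat.card (TripT k s) := rfl

variable {k : ℕ} {s : ℕ →₀ ℕ}

/-- extensionality for Kerov triples -/
lemma TripT.ext' {t₁ t₂ : TripT k s} (h : t₁.1.1 = t₂.1.1)
    (hq : ∀ d (h₁ : d ∈ cyclesOf t₁.1.1.2) (h₂ : d ∈ cyclesOf t₂.1.1.2),
      t₁.1.2 ⟨d, h₁⟩ = t₂.1.2 ⟨d, h₂⟩) : t₁ = t₂ := by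
  obtain ⟨⟨b₁, q₁⟩, hc₁⟩ := t₁
  obtain ⟨⟨b₂, q₂⟩, hc₂⟩ := t₂
  simp only at h hq
  apply Subtype.ext
  simp only
  subst h
  congr 1
  funext d
  exact hq d.1 d.2 d.2

def grpG (k : ℕ) : Subgroup (Perm (Fin k)) := Subgroup.zpowers (finRotate k)

lemma commute_of_mem_grpG {g : Perm (Fin k)} (hg : g ∈ grpG k) : Commute g (finRotate k) := by
  obtain ⟨n, rfl⟩ := hg
  exact (Commute.refl (finRotate k)).zpow_left n

instance : SMul (grpG k) (TripT k s) where
  smul g t := ⟨⟨((g : Perm (Fin k)) * t.1.1.1 * (g : Perm (Fin k))⁻¹,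
      (g : Perm (Fin k)) * t.1.1.2 * (g : Perm (Fin k))⁻¹),
      fun e => t.1.2 ((cycEquiv (g : Perm (Fin k)) t.1.1.2).symm e)⟩,
    KerovTripleCond.conj (commute_of_mem_grpG g.2) t.2⟩

lemma TripT.smul_def (g : grpG k) (t : TripT k s) :
    (g • t).1.1 = ((g : Perm (Fin k)) * t.1.1.1 * (g : Perm (Fin k))⁻¹,
      (g : Perm (Fin k)) * t.1.1.2 * (g : Perm (Fin k))⁻¹) := rfl

lemma TripT.smul_q (g : grpG k) (t : TripT k s) (e) :
    (g • t).1.2 e = t.1.2 ((cycEquiv (g : Perm (Fin k)) t.1.1.2).symm e) := rfl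

instance : MulAction (grpG k) (TripT k s) where
  one_smul t := by
    apply TripT.ext'
    · rw [TripT.smul_def]
      simp
    · intro d h₁ h₂
      rw [TripT.smul_q]
      apply q_congr
      show Finset.image (((1 : grpG k) : Perm (Fin k))⁻¹ : Perm (Fin k)) d = d
      ext z
      simp
  mul_smul g₁ g₂ t := by
    apply TripT.ext'
    · rw [TripT.smul_def, TripT.smul_def, TripT.smul_def]
      simp only [Subgroup.coe_mul, mul_inv_rev, Prod.mk.injEq]
      constructor <;> group
    · intro d h₁ h₂
      rw [TripT.smul_q, TripT.smul_q, TripT.smul_q]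
      apply q_congr
      show Finset.image (((g₁ * g₂ : grpG k) : Perm (Fin k))⁻¹ : Perm (Fin k)) d
        = Finset.image (((g₂ : grpG k) : Perm (Fin k))⁻¹ : Perm (Fin k))
            (Finset.image (((g₁ : grpG k) : Perm (Fin k))⁻¹ : Perm (Fin k)) d)
      rw [Finset.image_image]
      apply Finset.image_congr
      intro z _
      simp

instance : Finite (TripT k s) := by
  classical
  set B := s.support.sup id with hB
  have key : ∀ (t : TripT k s) (d : Finset (Fin k)) (h : d ∈ cyclesOf t.1.1.2),
      t.1.2 ⟨d, h⟩ < B + 1 := by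
    intro t d h
    have h5 := t.2.2.2.2.2.1
    have hne : Nonempty {c // t.1.2 c = t.1.2 ⟨d, h⟩} := ⟨⟨⟨d, h⟩, rfl⟩⟩
    have hpos : 0 < Nat.card {c // t.1.2 c = t.1.2 ⟨d, h⟩} := Nat.card_pos
    rw [h5 (t.1.2 ⟨d, h⟩)] at hpos
    have hmem : t.1.2 ⟨d, h⟩ ∈ s.support := Finsupp.mem_support_iff.2 (Nat.pos_iff_ne_zero.1 hpos)
    have hle := Finset.le_sup (f := id) hmem
    simp only [id] at hle
    omega
  set F : TripT k s → (Perm (Fin k) × Perm (Fin k)) × (Finset (Fin k) → Fin (B + 1)) :=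
    fun t => (t.1.1, fun d => if h : d ∈ cyclesOf t.1.1.2 then ⟨t.1.2 ⟨d, h⟩, key t d h⟩
      else ⟨0, Nat.succ_pos B⟩) with hF
  apply Finite.of_injective F
  intro t₁ t₂ hEq
  have hbase : t₁.1.1 = t₂.1.1 := congrArg Prod.fst hEq
  apply TripT.ext' hbase
  intro d h₁ h₂
  have := congrArg (fun x => (x.2 d : ℕ)) hEq
  simpa [hF, dif_pos h₁, dif_pos h₂] using this


open Equiv Equiv.Perm Finset MulAction

variable {k : ℕ} {s : ℕ →₀ ℕ}

def genG (k : ℕ) : grpG k := ⟨finRotate k, Subgroup.mem_zpowers _⟩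

lemma mem_fixedPoints_of_gen {t : TripT k s} (h : genG k • t = t) :
    t ∈ fixedPoints (grpG k) (TripT k s) := by
  intro g
  have hg : g ∈ MulAction.stabilizer (grpG k) t := by
    obtain ⟨n, hn⟩ := g.2
    have hgen : g = (genG k) ^ n := by
      apply Subtype.ext
      rw [← hn]
      rfl
    rw [hgen]
    exact Subgroup.zpow_mem _ (MulAction.mem_stabilizer_iff.2 h) n
  exact hg

lemma nkerov_modEq (p : ℕ) (hp : p.Prime) (s : ℕ →₀ ℕ) :
    Nkerov p s ≡ Nat.card (fixedPoints (grpG p) (TripT p s)) [MOD p] := by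
  haveI : Fact p.Prime := ⟨hp⟩
  have hcard : Nat.card (grpG p) = p ^ 1 := by
    rw [pow_one, grpG, Nat.card_zpowers, orderOf_finRotate' hp.two_le]
  have hpg : IsPGroup p (grpG p) := IsPGroup.of_card hcard
  rw [Nkerov_eq]
  exact hpg.card_modEq_card_fixedPoints (TripT p s)


open Equiv Equiv.Perm Finset MulAction

variable {p : ℕ} {s : ℕ →₀ ℕ}

lemma support_single_one (v : ℕ) : (Finsupp.single v (1 : ℕ)).support = {v} :=
  Finsupp.support_single_ne_zero v one_ne_zero

lemma sum_single_one (v : ℕ) :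
    ∑ i ∈ (Finsupp.single v (1 : ℕ)).support, (Finsupp.single v (1 : ℕ)) i = 1 := by
  rw [support_single_one, Finset.sum_singleton, Finsupp.single_eq_same]

lemma sum_mul_single_one (v : ℕ) :
    ∑ i ∈ (Finsupp.single v (1 : ℕ)).support, i * (Finsupp.single v (1 : ℕ)) i = v := by
  rw [support_single_one, Finset.sum_singleton, Finsupp.single_eq_same, mul_one]

lemma single_of_sum_one (h : ∑ i ∈ s.support, s i = 1) : ∃ v, s = Finsupp.single v 1 := by
  have hne : s.support.Nonempty := by
    rcases Finset.eq_empty_or_nonempty s.support with he | hne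
    · rw [he] at h; simp at h
    · exact hne
  obtain ⟨v, hv⟩ := hne
  have huniq : ∀ w ∈ s.support, w = v := by
    intro w hw
    by_contra hwv
    have hsub : {v, w} ⊆ s.support := by
      intro x hx
      rcases Finset.mem_insert.1 hx with rfl | hx
      · exact hv
      · rwa [Finset.mem_singleton.1 hx]
    have hsum2 : s v + s w ≤ ∑ i ∈ s.support, s i := by
      calc s v + s w = ∑ i ∈ ({v, w} : Finset ℕ), s i := by
            rw [Finset.sum_insert (by simpa using Ne.symm hwv), Finset.sum_singleton]
        _ ≤ ∑ i ∈ s.support, s i :=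
            Finset.sum_le_sum_of_subset hsub
    have hv1 : 1 ≤ s v := Nat.one_le_iff_ne_zero.2 (Finsupp.mem_support_iff.1 hv)
    have hw1 : 1 ≤ s w := Nat.one_le_iff_ne_zero.2 (Finsupp.mem_support_iff.1 hw)
    omega
  have hsupp : s.support = {v} := by
    apply Finset.eq_singleton_iff_unique_mem.2 ⟨hv, huniq⟩
  obtain ⟨hv0, hsing⟩ := Finsupp.support_eq_singleton.1 hsupp
  have hsv : s v = 1 := by
    rw [hsupp, Finset.sum_singleton] at h
    exact h
  rw [hsv] at hsing
  exact ⟨v, hsing⟩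

lemma subsingleton_cycles {σ₂ : Perm (Fin p)} (hcyc : cyclesOf σ₂ = {Finset.univ}) :
    Subsingleton {c // c ∈ cyclesOf σ₂} := by
  constructor
  intro a b
  apply Subtype.ext
  have ha : (a : Finset (Fin p)) ∈ ({Finset.univ} : Finset (Finset (Fin p))) := hcyc ▸ a.2
  have hb : (b : Finset (Fin p)) ∈ ({Finset.univ} : Finset (Finset (Fin p))) := hcyc ▸ b.2
  rw [Finset.mem_singleton] at ha hb
  rw [ha, hb]

lemma q_determined {σ₂ : Perm (Fin p)} (hcyc : cyclesOf σ₂ = {Finset.univ}) {v : ℕ}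
    (hss : s = Finsupp.single v 1) (q : {c // c ∈ cyclesOf σ₂} → ℕ)
    (h5 : ∀ i, Nat.card {c // q c = i} = s i) (e : {c // c ∈ cyclesOf σ₂}) : q e = v := by
  have hpos : 0 < Nat.card {c // q c = q e} := by
    haveI : Nonempty {c // q c = q e} := ⟨⟨e, rfl⟩⟩
    exact Nat.card_pos
  rw [h5 (q e), hss] at hpos
  by_contra hne
  rw [Finsupp.single_eq_of_ne' (Ne.symm hne)] at hpos
  omega

/-- the Kerov condition for a triple with `cyclesOf σ₂ = {univ}` and constant coloring -/
lemma cond_of {σ₁ σ₂ : Perm (Fin p)} (hmul : σ₁ * σ₂ = finRotate p)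
    (hcyc2 : cyclesOf σ₂ = {Finset.univ}) {v : ℕ} (hv : (cyclesOf σ₁).card + 1 = v)
    (hv2 : 2 ≤ v) :
    KerovTripleCond (Finsupp.single v 1) σ₁ σ₂ (fun _ => v) := by
  haveI hss := subsingleton_cycles hcyc2
  have hD1 : Nat.card {c // c ∈ cyclesOf σ₂} = 1 := by
    rw [Nat.card_eq_one_iff_unique]
    refine ⟨hss, ⟨⟨Finset.univ, ?_⟩⟩⟩
    rw [hcyc2]; exact Finset.mem_singleton_self _
  refine ⟨hmul, ?_, ?_, fun _ => hv2, ?_, ?_⟩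
  · rw [hcyc2, Finset.card_singleton, sum_single_one]
  · rw [hcyc2, Finset.card_singleton, sum_mul_single_one, hv]
  · intro i
    by_cases hiv : i = v
    · subst hiv
      rw [Finsupp.single_eq_same]
      rw [← hD1]
      exact Nat.card_congr (Equiv.subtypeUnivEquiv (fun _ => rfl))
    · rw [Finsupp.single_eq_of_ne' (Ne.symm hiv)]
      have : IsEmpty {c : {c // c ∈ cyclesOf σ₂} // v = i} := ⟨fun x => hiv x.2.symm⟩
      exact Nat.card_of_isEmpty
  · intro A hAne hAuniv
    exfalso
    apply hAuniv
    obtain ⟨a, ha⟩ := hAne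
    apply Finset.eq_univ_iff_forall.2
    intro b
    rwa [Subsingleton.elim b a]


open Equiv Equiv.Perm Finset MulAction

variable {p : ℕ} {s : ℕ →₀ ℕ}

lemma finRotate_ne_one (hp2 : 2 ≤ p) : finRotate p ≠ 1 := by
  intro h
  have := orderOf_finRotate' hp2
  rw [h, orderOf_one] at this
  omega

lemma cyclesOf_finRotate (hp : p.Prime) : cyclesOf (finRotate p) = {Finset.univ} := by
  have h := cyclesOf_zpow_eq (m := 1) hp (by rw [zpow_one]; exact finRotate_ne_one hp.two_le)
  rwa [zpow_one] at h

/-- classification of the fixed triples -/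
lemma fixed_shape (hp : p.Prime) (hs : ∀ i ∈ s.support, 2 ≤ i) (t : TripT p s)
    (ht : genG p • t = t) :
    (s = Finsupp.single (p + 1) 1 ∧ t.1.1 = (1, finRotate p)) ∨
    (s = Finsupp.single 2 1 ∧ ∃ m : ℤ, finRotate p ^ m ≠ 1 ∧ finRotate p ^ m ≠ finRotate p ∧
      t.1.1 = (finRotate p * (finRotate p ^ m)⁻¹, finRotate p ^ m)) := by
  have hp2 : 2 ≤ p := hp.two_le
  obtain ⟨⟨⟨σ₁, σ₂⟩, q⟩, hcond⟩ := t
  obtain ⟨h1, h2, h3, h4, h5, h6⟩ := hcond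
  replace h1 : σ₁ * σ₂ = finRotate p := h1
  replace h2 : (cyclesOf σ₂).card = ∑ i ∈ s.support, s i := h2
  replace h3 : (cyclesOf σ₁).card + (cyclesOf σ₂).card = ∑ i ∈ s.support, i * s i := h3
  replace h5 : ∀ i : ℕ, Nat.card {c // q c = i} = s i := h5
  have hbase := congrArg (fun x : TripT p s => x.1.1) ht
  simp only [TripT.smul_def, Prod.mk.injEq] at hbase
  obtain ⟨hb1, hb2⟩ := hbase
  have hcomm2 : Commute σ₂ (finRotate p) := by
    have hgc : (genG p : Perm (Fin p)) = finRotate p := rfl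
    rw [hgc] at hb2
    calc σ₂ * finRotate p = (finRotate p * σ₂ * (finRotate p)⁻¹) * finRotate p := by rw [hb2]
      _ = finRotate p * σ₂ := by group
  obtain ⟨m, hm⟩ := eq_zpow_of_commute hp2 hcomm2
  have hσ₁ : σ₁ = finRotate p * σ₂⁻¹ := by
    rw [← h1]; group
  by_cases hone : σ₂ = 1
  · -- σ₂ = 1 : impossible
    exfalso
    have hσ₁c : σ₁ = finRotate p := by rw [hσ₁, hone]; group
    have hcyc1 : cyclesOf σ₁ = {Finset.univ} := by
      rw [hσ₁c]; exact cyclesOf_finRotate hp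
    have h2' : (p : ℕ) = ∑ i ∈ s.support, s i := by
      rw [← h2, hone, card_cyclesOf_one]
    have h3' : 1 + (p : ℕ) = ∑ i ∈ s.support, i * s i := by
      rw [← h3, hone, card_cyclesOf_one, hcyc1, Finset.card_singleton]
    have hge : 2 * ∑ i ∈ s.support, s i ≤ ∑ i ∈ s.support, i * s i := by
      rw [Finset.mul_sum]
      apply Finset.sum_le_sum
      intro i hi
      exact Nat.mul_le_mul_right _ (hs i hi)
    omega
  · -- σ₂ ≠ 1
    have hcyc2 : cyclesOf σ₂ = {Finset.univ} := by
      rw [hm]; exact cyclesOf_zpow_eq hp (hm ▸ hone)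
    have hsum1 : ∑ i ∈ s.support, s i = 1 := by
      rw [← h2, hcyc2, Finset.card_singleton]
    obtain ⟨v, hv⟩ := single_of_sum_one hsum1
    have h3' : (cyclesOf σ₁).card + 1 = v := by
      rw [hcyc2, Finset.card_singleton] at h3
      rw [h3, hv, sum_mul_single_one]
    by_cases hone1 : σ₁ = 1
    · left
      have hcyc1 : (cyclesOf σ₁).card = p := by rw [hone1, card_cyclesOf_one]
      have hvp : v = p + 1 := by omega
      refine ⟨by rw [hv, hvp], ?_⟩
      have hσ₂c : σ₂ = finRotate p := by
        have h1' := h1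
        rw [hone1, one_mul] at h1'
        exact h1'
      show (σ₁, σ₂) = (1, finRotate p)
      rw [hone1, hσ₂c]
    · right
      have heq1m : finRotate p * (finRotate p ^ m)⁻¹ = finRotate p ^ (1 - m) := by group
      have hm1 : finRotate p ^ (1 - m) ≠ 1 := by
        intro hcon
        apply hone1
        rw [hσ₁, hm, heq1m, hcon]
      have hcyc1 : cyclesOf σ₁ = {Finset.univ} := by
        rw [hσ₁, hm, heq1m]
        exact cyclesOf_zpow_eq hp hm1
      have hv2 : v = 2 := by
        rw [hcyc1, Finset.card_singleton] at h3'
        omega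
      refine ⟨by rw [hv, hv2], m, hm ▸ hone, ?_, ?_⟩
      · intro hcon
        apply hm1
        rw [← heq1m, hcon]
        group
      · show (σ₁, σ₂) = _
        rw [hσ₁, hm]


open Equiv Equiv.Perm Finset MulAction

variable {p : ℕ} {s : ℕ →₀ ℕ}

lemma isFixed_const {σ₁ σ₂ : Perm (Fin p)} {v : ℕ}
    (hcond : KerovTripleCond s σ₁ σ₂ (fun _ => v))
    (hc1 : Commute σ₁ (finRotate p)) (hc2 : Commute σ₂ (finRotate p)) :
    genG p • (⟨⟨(σ₁, σ₂), fun _ => v⟩, hcond⟩ : TripT p s) = ⟨⟨(σ₁, σ₂), fun _ => v⟩, hcond⟩ := by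
  apply TripT.ext'
  · rw [TripT.smul_def]
    have hgc : ((genG p : grpG p) : Perm (Fin p)) = finRotate p := rfl
    rw [hgc]
    have e1 : finRotate p * σ₁ * (finRotate p)⁻¹ = σ₁ := by
      rw [← hc1.eq, mul_inv_cancel_right]
    have e2 : finRotate p * σ₂ * (finRotate p)⁻¹ = σ₂ := by
      rw [← hc2.eq, mul_inv_cancel_right]
    rw [e1, e2]
  · intro d h₁ h₂
    rfl

lemma zpow_eq_one_iff_zmod (hp2 : 2 ≤ p) (a : ℤ) :
    finRotate p ^ a = 1 ↔ ((a : ZMod p) = 0) := by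
  rw [show (1 : Perm (Fin p)) = finRotate p ^ (0 : ℤ) by rw [zpow_zero],
    zpow_eq_zpow_iff_modEq, orderOf_finRotate' hp2, ZMod.intCast_zmod_eq_zero_iff_dvd]
  exact ⟨fun h => (Int.modEq_zero_iff_dvd).1 h, fun h => (Int.modEq_zero_iff_dvd).2 h⟩

lemma zpow_eq_zpow_iff_zmod (hp2 : 2 ≤ p) (a b : ℤ) :
    finRotate p ^ a = finRotate p ^ b ↔ ((a : ZMod p) = (b : ZMod p)) := by
  rw [zpow_eq_zpow_iff_modEq, orderOf_finRotate' hp2, ← ZMod.intCast_eq_intCast_iff]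

lemma val_intCast_self {j : ZMod p} [NeZero p] : (((j.val : ℕ) : ℤ) : ZMod p) = j := by
  push_cast
  exact ZMod.natCast_rightInverse j

/-- Count of fixed points when `s = e_{p+1}`. -/
lemma card_fixed_case1 (hp : p.Prime) :
    Nat.card (fixedPoints (grpG p) (TripT p (Finsupp.single (p + 1) 1))) = 1 := by
  have hp2 : 2 ≤ p := hp.two_le
  have hs : ∀ i ∈ (Finsupp.single (p + 1) (1 : ℕ)).support, 2 ≤ i := by
    intro i hi
    rw [support_single_one, Finset.mem_singleton] at hi
    omega
  have hne : Finsupp.single (p + 1) (1 : ℕ) ≠ Finsupp.single 2 1 := by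
    intro h
    have := DFunLike.congr_fun h (p + 1)
    rw [Finsupp.single_eq_same, Finsupp.single_eq_of_ne' (by omega : (2 : ℕ) ≠ p + 1)] at this
    omega
  rw [Nat.card_eq_one_iff_unique]
  constructor
  · constructor
    rintro ⟨t, htf⟩ ⟨t', htf'⟩
    have hsh := fixed_shape hp hs t (htf (genG p))
    have hsh' := fixed_shape hp hs t' (htf' (genG p))
    rcases hsh with ⟨_, hb⟩ | ⟨hcon, _⟩; swap
    · exact absurd hcon hne
    rcases hsh' with ⟨_, hb'⟩ | ⟨hcon, _⟩; swap
    · exact absurd hcon hne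
    apply Subtype.ext
    apply TripT.ext' (by rw [hb, hb'])
    intro d h₁ h₂
    have hσ₂ : t.1.1.2 = finRotate p := congrArg Prod.snd hb
    have hσ₂' : t'.1.1.2 = finRotate p := congrArg Prod.snd hb'
    have hcyc : cyclesOf t.1.1.2 = {Finset.univ} := by rw [hσ₂]; exact cyclesOf_finRotate hp
    have hcyc' : cyclesOf t'.1.1.2 = {Finset.univ} := by rw [hσ₂']; exact cyclesOf_finRotate hp
    rw [q_determined hcyc rfl t.1.2 t.2.2.2.2.2.1 ⟨d, h₁⟩,
      q_determined hcyc' rfl t'.1.2 t'.2.2.2.2.2.1 ⟨d, h₂⟩]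
  · have hcond : KerovTripleCond (Finsupp.single (p + 1) 1) 1 (finRotate p)
        (fun _ => p + 1) := by
      apply cond_of (one_mul _) (cyclesOf_finRotate hp) _ (by omega)
      rw [card_cyclesOf_one]
    exact ⟨⟨⟨⟨(1, finRotate p), fun _ => p + 1⟩, hcond⟩,
      mem_fixedPoints_of_gen (isFixed_const hcond (Commute.one_left _) (Commute.refl _))⟩⟩

/-- Count of fixed points when `s` is not `e_{p+1}` or `e_2`. -/
lemma card_fixed_case3 (hp : p.Prime) (hs : ∀ i ∈ s.support, 2 ≤ i)
    (h1 : s ≠ Finsupp.single (p + 1) 1) (h2 : s ≠ Finsupp.single 2 1) :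
    Nat.card (fixedPoints (grpG p) (TripT p s)) = 0 := by
  have : IsEmpty (fixedPoints (grpG p) (TripT p s)) := by
    constructor
    rintro ⟨t, htf⟩
    rcases fixed_shape hp hs t (htf (genG p)) with ⟨hcon, _⟩ | ⟨hcon, _⟩
    · exact h1 hcon
    · exact h2 hcon
  exact Nat.card_of_isEmpty


open Equiv Equiv.Perm Finset MulAction

variable {p : ℕ}

/-- Count of fixed points when `s = e_2`. -/
lemma card_fixed_case2 (hp : p.Prime) :
    Nat.card (fixedPoints (grpG p) (TripT p (Finsupp.single 2 1))) = p - 2 := by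
  haveI : NeZero p := ⟨hp.ne_zero⟩
  haveI : Fact (1 < p) := ⟨hp.one_lt⟩
  have hp2 : 2 ≤ p := hp.two_le
  have hs : ∀ i ∈ (Finsupp.single 2 (1 : ℕ)).support, 2 ≤ i := by
    intro i hi
    rw [support_single_one, Finset.mem_singleton] at hi
    omega
  have hne : Finsupp.single 2 (1 : ℕ) ≠ Finsupp.single (p + 1) 1 := by
    intro h
    have := DFunLike.congr_fun h 2
    rw [Finsupp.single_eq_same, Finsupp.single_eq_of_ne' (by omega : p + 1 ≠ 2)] at this
    omega
  -- the data needed to build a fixed point from j : ZMod p, j ∉ {0, 1}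
  have build : ∀ j : ZMod p, j ≠ 0 → j ≠ 1 →
      KerovTripleCond (Finsupp.single 2 1)
        (finRotate p * (finRotate p ^ ((j.val : ℕ) : ℤ))⁻¹) (finRotate p ^ ((j.val : ℕ) : ℤ))
        (fun _ => 2) := by
    intro j hj0 hj1
    have hm1 : finRotate p ^ ((j.val : ℕ) : ℤ) ≠ 1 := by
      rw [Ne, zpow_eq_one_iff_zmod hp2, val_intCast_self]
      exact hj0
    have heq1m : finRotate p * (finRotate p ^ ((j.val : ℕ) : ℤ))⁻¹
        = finRotate p ^ (1 - ((j.val : ℕ) : ℤ)) := by group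
    have hm2 : finRotate p ^ (1 - ((j.val : ℕ) : ℤ)) ≠ 1 := by
      rw [Ne, zpow_eq_one_iff_zmod hp2]
      push_cast
      rw [show ((j.val : ℕ) : ZMod p) = j from ZMod.natCast_rightInverse j]
      intro hcon
      exact hj1 (sub_eq_zero.1 hcon).symm
    apply cond_of (by group) (cyclesOf_zpow_eq hp hm1) _ (le_refl 2)
    rw [heq1m, cyclesOf_zpow_eq hp hm2, Finset.card_singleton]
  set Φ : {j : ZMod p // j ≠ 0 ∧ j ≠ 1} →
      fixedPoints (grpG p) (TripT p (Finsupp.single 2 1)) :=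
    fun j => ⟨⟨⟨(finRotate p * (finRotate p ^ ((j.1.val : ℕ) : ℤ))⁻¹,
        finRotate p ^ ((j.1.val : ℕ) : ℤ)), fun _ => 2⟩, build j.1 j.2.1 j.2.2⟩,
      mem_fixedPoints_of_gen (isFixed_const _
        (Commute.mul_left (Commute.refl _) (((Commute.refl _).zpow_left _).inv_left))
        ((Commute.refl _).zpow_left _))⟩ with hΦ
  have hbij : Function.Bijective Φ := by
    constructor
    · intro j j' hjj
      have hval := congrArg
        (fun x : fixedPoints (grpG p) (TripT p (Finsupp.single 2 1)) => x.1.1.1.2) hjj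
      simp only [hΦ] at hval
      have := (zpow_eq_zpow_iff_zmod hp2 _ _).1 hval
      rw [val_intCast_self, val_intCast_self] at this
      exact Subtype.ext this
    · rintro ⟨t, htf⟩
      rcases fixed_shape hp hs t (htf (genG p)) with ⟨hcon, _⟩ | ⟨_, m, hm1, hmc, hbase⟩
      · exact absurd hcon hne
      set j : ZMod p := (m : ZMod p) with hj
      have hj0 : j ≠ 0 := by
        intro hcon
        exact hm1 ((zpow_eq_one_iff_zmod hp2 m).2 hcon)
      have hj1 : j ≠ 1 := by
        intro hcon
        apply hmc
        have : finRotate p ^ m = finRotate p ^ (1 : ℤ) := by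
          rw [zpow_eq_zpow_iff_zmod hp2, ← hj, hcon]
          push_cast
          rfl
        rwa [zpow_one] at this
      refine ⟨⟨j, hj0, hj1⟩, ?_⟩
      apply Subtype.ext
      have hpow : finRotate p ^ ((j.val : ℕ) : ℤ) = finRotate p ^ m := by
        rw [zpow_eq_zpow_iff_zmod hp2, val_intCast_self]
      apply TripT.ext'
      · show (finRotate p * (finRotate p ^ ((j.val : ℕ) : ℤ))⁻¹,
            finRotate p ^ ((j.val : ℕ) : ℤ)) = t.1.1
        rw [hpow, hbase]
      · intro d h₁ h₂
        have hσ₂ : t.1.1.2 = finRotate p ^ m := congrArg Prod.snd hbase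
        have hcyc : cyclesOf t.1.1.2 = {Finset.univ} := by
          rw [hσ₂]; exact cyclesOf_zpow_eq hp hm1
        rw [q_determined hcyc rfl t.1.2 t.2.2.2.2.2.1 ⟨d, h₂⟩]
  rw [← Nat.card_eq_of_bijective Φ hbij]
  -- count {j : ZMod p // j ≠ 0 ∧ j ≠ 1}
  rw [Nat.card_eq_fintype_card]
  have hequiv : {j : ZMod p // j ≠ 0 ∧ j ≠ 1} ≃ {j : ZMod p // ¬(j = 0 ∨ j = 1)} :=
    Equiv.subtypeEquivRight (by intro j; tauto)
  rw [Fintype.card_congr hequiv, Fintype.card_subtype_compl]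
  have hcard2 : Fintype.card {j : ZMod p // j = 0 ∨ j = 1} = 2 := by
    rw [Fintype.card_subtype]
    have : (Finset.univ.filter fun j : ZMod p => j = 0 ∨ j = 1) = {0, 1} := by
      ext j
      simp [Finset.mem_insert, Finset.mem_singleton]
    rw [this, Finset.card_insert_of_notMem (by simp [zero_ne_one]), Finset.card_singleton]
  rw [hcard2, ZMod.card]


/-- Lemma 3.3, first expression: for `p` an odd prime,
`(Σ_p − R_{p+1} + 2R_2)/p` is a polynomial in the free cumulants with nonnegative integer
coefficients: for every finitely supported `s : {2,3,…} → ℕ`, the integer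
`N_p(s) − [s = e_{p+1}] + 2·[s = e_2]` is nonnegative and divisible by `p`. -/
theorem gal_divisibility_Sigma_p (p : ℕ) (hp : p.Prime) (hodd : Odd p)
    (s : ℕ →₀ ℕ) (hs : ∀ i ∈ s.support, 2 ≤ i) :
    ∃ m : ℕ, (Nkerov p s : ℤ)
        - (if s = Finsupp.single (p + 1) 1 then 1 else 0)
        + 2 * (if s = Finsupp.single 2 1 then 1 else 0) = (p : ℤ) * (m : ℤ) := by
  have hp2 : 2 ≤ p := hp.two_le
  have hmod := nkerov_modEq p hp s
  by_cases h1 : s = Finsupp.single (p + 1) 1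
  · by_cases h2 : s = Finsupp.single 2 1
    · exfalso
      rw [h1] at h2
      have := DFunLike.congr_fun h2 2
      rw [Finsupp.single_eq_same, Finsupp.single_eq_of_ne' (by omega : p + 1 ≠ 2)] at this
      omega
    · rw [if_pos h1, if_neg h2]
      rw [h1] at hmod
      rw [card_fixed_case1 hp] at hmod
      rw [← h1] at hmod
      have hN1 : 1 ≤ Nkerov p s := by
        by_contra hcon
        have hN0 : Nkerov p s = 0 := by omega
        rw [hN0] at hmod
        have h01 : 0 % p = 1 % p := hmod
        rw [Nat.zero_mod, Nat.mod_eq_of_lt (by omega)] at h01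
        omega
      obtain ⟨m, hm⟩ := (Nat.modEq_iff_dvd' hN1).1 hmod.symm
      refine ⟨m, ?_⟩
      have hcast : (Nkerov p s : ℤ) - 1 = (p : ℤ) * m := by
        have := congrArg (Nat.cast : ℕ → ℤ) hm
        push_cast [Nat.cast_sub hN1] at this
        linarith
      linarith
  · by_cases h2 : s = Finsupp.single 2 1
    · rw [if_neg h1, if_pos h2]
      rw [h2, card_fixed_case2 hp, ← h2] at hmod
      have hmod2 : Nkerov p s + 2 ≡ (p - 2) + 2 [MOD p] := Nat.ModEq.add_right 2 hmod
      rw [show p - 2 + 2 = p by omega] at hmod2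
      have hmod3 : Nkerov p s + 2 ≡ 0 [MOD p] := hmod2.trans (Nat.modEq_zero_iff_dvd.2 dvd_rfl)
      obtain ⟨m, hm⟩ := Nat.modEq_zero_iff_dvd.1 hmod3
      refine ⟨m, ?_⟩
      have := congrArg (Nat.cast : ℕ → ℤ) hm
      push_cast at this
      linarith
    · rw [if_neg h1, if_neg h2]
      rw [card_fixed_case3 hp hs h1 h2] at hmod
      obtain ⟨m, hm⟩ := Nat.modEq_zero_iff_dvd.1 hmod
      refine ⟨m, ?_⟩
      have := congrArg (Nat.cast : ℕ → ℤ) hm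
      push_cast at this
      linarith

end
end
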